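/- arXiv:2304.11423 — 6 statements merged into one kernel-verified Lean document; each statement's English description precedes it below -/
import Mathlib

section
/- Let G be a finite simple graph on n vertices and let c be an integer with 2 ≤ c ≤ n − 2. If all induced subgraphs of G on c vertices have the same number of edges (that is, e(S) = e(S') for all vertex subsets S, S' of cardinality c), then G is either a complete graph or has no edges at all. -/
open Finset

/-- `e(S)`: the number of edges of the subgraph of `G` induced by the vertex set `S`. -/
def inducedSize {V : Type*} [Fintype V] [DecidableEq V] (G : SimpleGraph V)
    [DecidableRel G.Adj] (S : Finset V) : ℕ :=
  (G.edgeFinset.filter (· ∈ S.sym2)).card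

section Aux

variable {V : Type*} [Fintype V] [DecidableEq V] (G : SimpleGraph V) [DecidableRel G.Adj]

lemma mem_erase_sym2 (U : Finset V) (x : V) (f : Sym2 V) :
    f ∈ (U.erase x).sym2 ↔ f ∈ U.sym2 ∧ x ∉ f := by
  simp only [Finset.mem_sym2_iff, Finset.mem_erase]
  constructor
  · intro hf
    exact ⟨fun a ha => (hf a ha).2, fun hx => (hf x hx).1 rfl⟩
  · rintro ⟨hf, hx⟩ a ha
    exact ⟨fun e => hx (e ▸ ha), hf a ha⟩

lemma erase_split (U : Finset V) (x : V) :
    inducedSize G U = inducedSize G (U.erase x)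
      + (G.edgeFinset.filter (fun f => f ∈ U.sym2 ∧ x ∈ f)).card := by
  unfold inducedSize
  have h1 : G.edgeFinset.filter (· ∈ (U.erase x).sym2)
      = G.edgeFinset.filter (fun f => f ∈ U.sym2 ∧ x ∉ f) := by
    apply Finset.filter_congr
    intro f _
    exact mem_erase_sym2 U x f
  rw [h1]
  have h2 := Finset.card_filter_add_card_filter_not
    (s := G.edgeFinset.filter (· ∈ U.sym2)) (p := fun f => x ∈ f)
  rw [Finset.filter_filter, Finset.filter_filter] at h2
  omega

lemma card_filter_mem_edge {a b : V} (hab : a ≠ b) {U : Finset V}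
    (ha : a ∈ U) (hb : b ∈ U) :
    (U.filter (· ∈ (s(a,b) : Sym2 V))).card = 2 := by
  have h : U.filter (· ∈ (s(a,b) : Sym2 V)) = {a, b} := by
    ext t
    simp only [Finset.mem_filter, Sym2.mem_iff, Finset.mem_insert, Finset.mem_singleton]
    constructor
    · rintro ⟨_, h⟩; exact h
    · rintro (rfl | rfl) <;> simp [ha, hb]
  rw [h, Finset.card_pair hab]

lemma sum_inc (U : Finset V) :
    ∑ x ∈ U, (G.edgeFinset.filter (fun f => f ∈ U.sym2 ∧ x ∈ f)).card
      = 2 * inducedSize G U := by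
  unfold inducedSize
  simp_rw [Finset.card_filter]
  rw [Finset.sum_comm, Finset.mul_sum]
  apply Finset.sum_congr rfl
  intro f hf
  by_cases hU : f ∈ U.sym2
  · simp only [hU, true_and, mul_ite, mul_one, mul_zero, if_true]
    rw [← Finset.card_filter]
    induction f with
    | _ a b =>
      have hadj : G.Adj a b := by
        rwa [SimpleGraph.mem_edgeFinset, SimpleGraph.mem_edgeSet] at hf
      have hab := Finset.mk_mem_sym2_iff.mp hU
      exact card_filter_mem_edge hadj.ne hab.1 hab.2
  · simp [hU]

lemma sum_erase_key (U : Finset V) :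
    ∑ x ∈ U, inducedSize G (U.erase x) + 2 * inducedSize G U
      = U.card * inducedSize G U := by
  rw [← sum_inc G U, ← Finset.sum_add_distrib]
  rw [Finset.sum_congr rfl (fun x _ => (erase_split G U x).symm)]
  simp [Finset.sum_const, mul_comm]

lemma up_step (k : ℕ) (hk : 2 ≤ k)
    (hP : ∀ S S' : Finset V, S.card = k → S'.card = k →
      inducedSize G S = inducedSize G S') :
    ∀ S S' : Finset V, S.card = k + 1 → S'.card = k + 1 →
      inducedSize G S = inducedSize G S' := by
  intro U U' hU hU'
  obtain ⟨x₁, hx₁⟩ := Finset.card_pos.mp (by omega : 0 < U'.card)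
  set q := inducedSize G (U'.erase x₁) with hq
  have key : ∀ W : Finset V, W.card = k + 1 →
      (k + 1) * q + 2 * inducedSize G W = (k + 1) * inducedSize G W := by
    intro W hW
    have h2 : ∑ x ∈ W, inducedSize G (W.erase x) = (k + 1) * q := by
      rw [Finset.sum_congr rfl (fun x hx => hP _ _
        (by rw [Finset.card_erase_of_mem hx, hW]; omega)
        (by rw [Finset.card_erase_of_mem hx₁, hU']; omega))]
      simp [Finset.sum_const, hW, mul_comm]
      exact hq.symm
    have h3 := sum_erase_key G W
    rw [h2, hW] at h3
    exact h3
  have hU1 := key U hU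
  have hU2 := key U' hU'
  have hcan : ((k : ℤ) - 1) * (inducedSize G U : ℤ)
      = ((k : ℤ) - 1) * (inducedSize G U' : ℤ) := by
    have c1 : ((k : ℤ) + 1) * q + 2 * (inducedSize G U : ℤ)
        = ((k : ℤ) + 1) * (inducedSize G U : ℤ) := by exact_mod_cast hU1
    have c2 : ((k : ℤ) + 1) * q + 2 * (inducedSize G U' : ℤ)
        = ((k : ℤ) + 1) * (inducedSize G U' : ℤ) := by exact_mod_cast hU2
    ring_nf
    ring_nf at c1 c2
    linarith
  have hne : ((k : ℤ) - 1) ≠ 0 := by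
    have : (2 : ℤ) ≤ (k : ℤ) := by exact_mod_cast hk
    omega
  exact_mod_cast mul_left_cancel₀ hne hcan

lemma deg_count (x : V) :
    inducedSize G (Finset.univ.erase x) + G.degree x = G.edgeFinset.card := by
  rw [← SimpleGraph.card_incidenceFinset_eq_degree, SimpleGraph.incidenceFinset_eq_filter]
  unfold inducedSize
  have h1 : G.edgeFinset.filter (· ∈ (Finset.univ.erase x).sym2)
      = G.edgeFinset.filter (fun f => ¬ x ∈ f) := by
    apply Finset.filter_congr
    intro f _
    rw [mem_erase_sym2]
    simp [Finset.mem_sym2_iff]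
  rw [h1]
  have h2 := Finset.card_filter_add_card_filter_not
    (s := G.edgeFinset) (p := fun f => x ∈ f)
  omega

lemma filter_both_card {x y : V} (hxy : x ≠ y) :
    (G.edgeFinset.filter (fun f => x ∈ f ∧ y ∈ f)).card
      = if G.Adj x y then 1 else 0 := by
  by_cases hA : G.Adj x y
  · rw [if_pos hA]
    have h : G.edgeFinset.filter (fun f => x ∈ f ∧ y ∈ f) = {s(x, y)} := by
      ext f
      simp only [Finset.mem_filter, Finset.mem_singleton]
      constructor
      · rintro ⟨_, hx, hy⟩
        exact (Sym2.mem_and_mem_iff hxy).mp ⟨hx, hy⟩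
      · rintro rfl
        simp [SimpleGraph.mem_edgeFinset, hA]
    simp [h]
  · rw [if_neg hA]
    rw [Finset.card_eq_zero]
    ext f
    simp only [Finset.mem_filter, Finset.notMem_empty, iff_false]
    rintro ⟨hf, hx, hy⟩
    have := (Sym2.mem_and_mem_iff hxy).mp ⟨hx, hy⟩
    subst this
    rw [SimpleGraph.mem_edgeFinset, SimpleGraph.mem_edgeSet] at hf
    exact hA hf

lemma pair_count {x y : V} (hxy : x ≠ y) :
    inducedSize G ((Finset.univ.erase x).erase y) + G.degree x + G.degree y
      = G.edgeFinset.card + (if G.Adj x y then 1 else 0) := by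
  classical
  set E := G.edgeFinset with hE
  have h1 : E.filter (· ∈ ((Finset.univ.erase x).erase y).sym2)
      = E.filter (fun f => ¬ (x ∈ f ∨ y ∈ f)) := by
    apply Finset.filter_congr
    intro f _
    rw [mem_erase_sym2, mem_erase_sym2]
    simp only [Finset.mem_sym2_iff, Finset.mem_univ, implies_true, true_and, not_or]
  have hsplit := Finset.card_filter_add_card_filter_not
    (s := E) (p := fun f => x ∈ f ∨ y ∈ f)
  have hunion : E.filter (fun f => x ∈ f ∨ y ∈ f)
      = E.filter (fun f => x ∈ f) ∪ E.filter (fun f => y ∈ f) :=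
    Finset.filter_or _ _ _
  have hinter : E.filter (fun f => x ∈ f) ∩ E.filter (fun f => y ∈ f)
      = E.filter (fun f => x ∈ f ∧ y ∈ f) := by
    ext f; simp [Finset.mem_filter]; tauto
  have hcu : (E.filter (fun f => x ∈ f ∨ y ∈ f)).card
      + (if G.Adj x y then 1 else 0)
      = (E.filter (fun f => x ∈ f)).card + (E.filter (fun f => y ∈ f)).card := by
    rw [hunion, ← filter_both_card G hxy, ← hinter]
    exact Finset.card_union_add_card_inter _ _
  have hdx : (E.filter (fun f => x ∈ f)).card = G.degree x := by
    rw [← SimpleGraph.card_incidenceFinset_eq_degree, SimpleGraph.incidenceFinset_eq_filter]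
  have hdy : (E.filter (fun f => y ∈ f)).card = G.degree y := by
    rw [← SimpleGraph.card_incidenceFinset_eq_degree, SimpleGraph.incidenceFinset_eq_filter]
  have hs : inducedSize G ((Finset.univ.erase x).erase y)
      = (E.filter (fun f => ¬ (x ∈ f ∨ y ∈ f))).card := by
    unfold inducedSize; rw [← hE, h1]
  set a := (if G.Adj x y then 1 else 0) with ha
  omega

end Aux

/-- If `2 ≤ c ≤ n - 2` and all induced subgraphs of `G` on `c` vertices have the same
number of edges, then `G` is complete or edgeless. -/
theorem stmt_0 {V : Type*} [Fintype V] [DecidableEq V] (G : SimpleGraph V)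
    [DecidableRel G.Adj] (c : ℕ) (hc2 : 2 ≤ c) (hcn : c ≤ Fintype.card V - 2)
    (h : ∀ S S' : Finset V, S.card = c → S'.card = c →
      inducedSize G S = inducedSize G S') :
    G = ⊤ ∨ G = ⊥ := by
  classical
  set N := Fintype.card V with hN
  have hN4 : c + 2 ≤ N := by omega
  have main : ∀ k, c ≤ k → ∀ S S' : Finset V, S.card = k → S'.card = k →
      inducedSize G S = inducedSize G S' := by
    intro k hk
    induction k, hk using Nat.le_induction with
    | base => exact h
    | succ n hn ih => exact up_step G n (le_trans hc2 hn) ih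
  have hdeg : ∀ x y : V, G.degree x = G.degree y := by
    intro x y
    have h1 := deg_count G x
    have h2 := deg_count G y
    have h3 := main (N - 1) (by omega) (Finset.univ.erase x) (Finset.univ.erase y)
      (by rw [Finset.card_erase_of_mem (Finset.mem_univ x), Finset.card_univ])
      (by rw [Finset.card_erase_of_mem (Finset.mem_univ y), Finset.card_univ])
    omega
  have hadj : ∀ u v x y : V, u ≠ v → x ≠ y → (G.Adj u v ↔ G.Adj x y) := by
    intro u v x y huv hxy
    have p1 := pair_count G huv
    have p2 := pair_count G hxy
    have hcard : ∀ a b : V, a ≠ b →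
        ((Finset.univ.erase a).erase b).card = N - 2 := by
      intro a b hab
      rw [Finset.card_erase_of_mem (Finset.mem_erase.mpr ⟨hab.symm, Finset.mem_univ b⟩),
        Finset.card_erase_of_mem (Finset.mem_univ a), Finset.card_univ]
      omega
    have h3 := main (N - 2) hcn _ _ (hcard u v huv) (hcard x y hxy)
    have d1 := hdeg u x
    have d2 := hdeg v y
    constructor <;> intro hA <;> by_contra hB <;>
      simp only [hA, hB, if_true, if_false] at p1 p2 <;> omega
  by_cases hEx : ∃ u v : V, G.Adj u v
  · left
    obtain ⟨u, v, huv⟩ := hEx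
    ext x y
    simp only [SimpleGraph.top_adj]
    constructor
    · exact G.ne_of_adj
    · intro hxy
      exact (hadj u v x y huv.ne hxy).mp huv
  · right
    push_neg at hEx
    ext x y
    simp [hEx x y]
end

section
/- Let G be a finite simple graph on n vertices and let c be an integer with 2 ≤ c ≤ n − 1. If all induced subgraphs of G on c vertices have the same number of edges (that is, e(S) = e(S') for all vertex subsets S, S' of cardinality c), then G is regular, i.e., all vertices of G have the same degree. -/
open Finset

lemma inducedSize_insert {V : Type*} [Fintype V] [DecidableEq V] (G : SimpleGraph V)
    [DecidableRel G.Adj] (u : V) (A : Finset V) (hu : u ∉ A) :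
    inducedSize G (insert u A) = inducedSize G A + (A.filter (G.Adj u)).card := by
  classical
  unfold inducedSize
  have hsub : G.edgeFinset.filter (· ∈ A.sym2) ⊆
      G.edgeFinset.filter (· ∈ (insert u A).sym2) :=
    Finset.monotone_filter_right _ (fun e _ he => Finset.sym2_mono (subset_insert u A) he)
  rw [← Finset.card_sdiff_add_card_eq_card hsub, add_comm]
  congr 1
  refine (Finset.card_bij (fun w _ => s(u, w)) ?_ ?_ ?_).symm
  · intro w hw
    rw [mem_filter] at hw
    obtain ⟨hwA, hadj⟩ := hw
    rw [mem_sdiff, mem_filter, mem_filter]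
    refine ⟨⟨?_, ?_⟩, ?_⟩
    · exact SimpleGraph.mem_edgeFinset.2 hadj
    · exact Finset.mk_mem_sym2_iff.2 ⟨mem_insert_self u A, mem_insert_of_mem hwA⟩
    · intro hc
      exact hu (Finset.mk_mem_sym2_iff.1 hc.2).1
  · intro w₁ h₁ w₂ h₂ heq
    exact (Sym2.congr_right).1 heq
  · intro e he
    rw [mem_sdiff, mem_filter] at he
    obtain ⟨⟨heG, heS⟩, heA⟩ := he
    induction e using Sym2.inductionOn with
    | hf a b =>
      have hadj : G.Adj a b := SimpleGraph.mem_edgeFinset.1 heG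
      rw [Finset.mk_mem_sym2_iff] at heS
      have hnab : ¬ (a ∈ A ∧ b ∈ A) := by
        intro hc
        exact heA (mem_filter.2 ⟨heG, Finset.mk_mem_sym2_iff.2 hc⟩)
      rcases mem_insert.1 heS.1 with rfl | haA
      · have hbA : b ∈ A := by
          rcases mem_insert.1 heS.2 with rfl | hb
          · exact absurd rfl hadj.ne
          · exact hb
        exact ⟨b, mem_filter.2 ⟨hbA, hadj⟩, rfl⟩
      · rcases mem_insert.1 heS.2 with rfl | hbA
        · exact ⟨a, mem_filter.2 ⟨haA, hadj.symm⟩, Sym2.eq_swap⟩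
        · exact absurd ⟨haA, hbA⟩ hnab

lemma count_mem_powersetCard {V : Type*} [DecidableEq V] (W : Finset V) (w : V)
    (hw : w ∈ W) (k : ℕ) :
    ((W.powersetCard (k+1)).filter (fun A => w ∈ A)).card = (W.card - 1).choose k := by
  classical
  have : ((W.powersetCard (k+1)).filter (fun A => w ∈ A)).card
      = ((W.erase w).powersetCard k).card := by
    refine Finset.card_bij (fun A _ => A.erase w) ?_ ?_ ?_
    · intro A hA
      rw [mem_filter, mem_powersetCard] at hA
      rw [mem_powersetCard]
      exact ⟨erase_subset_erase w hA.1.1, by rw [card_erase_of_mem hA.2, hA.1.2]; rfl⟩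
    · intro A₁ h₁ A₂ h₂ heq
      rw [mem_filter] at h₁ h₂
      have := congrArg (insert w) heq
      rwa [insert_erase h₁.2, insert_erase h₂.2] at this
    · intro B hB
      rw [mem_powersetCard] at hB
      have hwB : w ∉ B := fun hc => (mem_erase.1 (hB.1 hc)).1 rfl
      refine ⟨insert w B, ?_, erase_insert hwB⟩
      rw [mem_filter, mem_powersetCard]
      exact ⟨⟨insert_subset hw (hB.1.trans (erase_subset w W)),
        by rw [card_insert_of_notMem hwB, hB.2]⟩, mem_insert_self w B⟩
  rw [this, card_powersetCard, card_erase_of_mem hw]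

lemma sum_filter_card_powersetCard {V : Type*} [DecidableEq V] (W : Finset V)
    (p : V → Prop) [DecidablePred p] (k : ℕ) :
    ∑ A ∈ W.powersetCard (k+1), (A.filter p).card
      = (W.filter p).card * (W.card - 1).choose k := by
  classical
  have step : ∀ A ∈ W.powersetCard (k+1),
      (A.filter p).card = ∑ w ∈ W.filter p, if w ∈ A then 1 else 0 := by
    intro A hA
    rw [mem_powersetCard] at hA
    rw [← Finset.card_filter]
    congr 1
    ext w
    simp only [mem_filter]
    exact ⟨fun ⟨hwA, hpw⟩ => ⟨⟨hA.1 hwA, hpw⟩, hwA⟩, fun ⟨⟨_, hpw⟩, hwA⟩ => ⟨hwA, hpw⟩⟩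
  rw [Finset.sum_congr rfl step, Finset.sum_comm]
  have inner : ∀ w ∈ W.filter p,
      (∑ A ∈ W.powersetCard (k+1), if w ∈ A then 1 else 0) = (W.card - 1).choose k := by
    intro w hw
    rw [← Finset.card_filter]
    exact count_mem_powersetCard W w (mem_filter.1 hw).1 k
  rw [Finset.sum_congr rfl inner, Finset.sum_const, smul_eq_mul]

/-- If `2 ≤ c ≤ n - 1` and all induced subgraphs of `G` on `c` vertices have the same
number of edges, then `G` is regular. -/
theorem stmt_1 {V : Type*} [Fintype V] [DecidableEq V] (G : SimpleGraph V)
    [DecidableRel G.Adj] (c : ℕ) (hc2 : 2 ≤ c) (hcn : c ≤ Fintype.card V - 1)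
    (h : ∀ S S' : Finset V, S.card = c → S'.card = c →
      inducedSize G S = inducedSize G S') :
    ∃ k : ℕ, ∀ v : V, G.degree v = k := by
  classical
  set n := Fintype.card V with hn
  have hn3 : 3 ≤ n := by omega
  have hcard_pos : 0 < Fintype.card V := by omega
  have : Nonempty V := Fintype.card_pos_iff.1 hcard_pos
  obtain ⟨v₀⟩ := this
  refine ⟨G.degree v₀, fun v => ?_⟩
  suffices key : ∀ u w : V, G.degree u = G.degree w from key v v₀
  intro u v
  rcases eq_or_ne u v with rfl | huv
  · rfl
  set W : Finset V := univ \ {u, v} with hW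
  have hWcard : W.card = n - 2 := by
    rw [hW, card_sdiff_of_subset (subset_univ _), card_univ, card_pair huv]
  have huW : u ∉ W := by simp [hW]
  have hvW : v ∉ W := by simp [hW]
  -- for each A in powersetCard (c-1) W, filter cards agree
  have hA : ∀ A ∈ W.powersetCard (c-1),
      (A.filter (G.Adj u)).card = (A.filter (G.Adj v)).card := by
    intro A hAmem
    rw [mem_powersetCard] at hAmem
    obtain ⟨hAW, hAcard⟩ := hAmem
    have hu : u ∉ A := fun hc => huW (hAW hc)
    have hv : v ∉ A := fun hc => hvW (hAW hc)
    have h1 := inducedSize_insert G u A hu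
    have h2 := inducedSize_insert G v A hv
    have hc1 : (insert u A).card = c := by
      rw [card_insert_of_notMem hu, hAcard]; omega
    have hc2' : (insert v A).card = c := by
      rw [card_insert_of_notMem hv, hAcard]; omega
    have := h (insert u A) (insert v A) hc1 hc2'
    omega
  -- sum the equality
  have hc1eq : c - 1 = (c - 2) + 1 := by omega
  have hsum : (W.filter (G.Adj u)).card * (W.card - 1).choose (c-2)
      = (W.filter (G.Adj v)).card * (W.card - 1).choose (c-2) := by
    rw [← sum_filter_card_powersetCard W (G.Adj u) (c-2), ← sum_filter_card_powersetCard W (G.Adj v) (c-2), ← hc1eq]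
    exact Finset.sum_congr rfl hA
  have hchoose_pos : 0 < (W.card - 1).choose (c-2) :=
    Nat.choose_pos (by omega)
  have hfil : (W.filter (G.Adj u)).card = (W.filter (G.Adj v)).card :=
    Nat.eq_of_mul_eq_mul_right hchoose_pos hsum
  -- now compute degrees
  have hdeg : ∀ x : V, G.degree x = (W.filter (G.Adj x)).card
      + (({u, v} : Finset V).filter (G.Adj x)).card := by
    intro x
    rw [SimpleGraph.degree, SimpleGraph.neighborFinset_eq_filter]
    have huniv : (univ : Finset V) = W ∪ {u, v} :=
      (Finset.sdiff_union_of_subset (subset_univ _)).symm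
    rw [huniv, filter_union]
    exact card_union_of_disjoint (Finset.disjoint_filter_filter
      (Finset.sdiff_disjoint))
  have hpair : (({u, v} : Finset V).filter (G.Adj u)).card
      = (({u, v} : Finset V).filter (G.Adj v)).card := by
    by_cases hadj : G.Adj u v
    · have h1 : ({u, v} : Finset V).filter (G.Adj u) = {v} := by
        ext x; simp only [mem_filter, mem_insert, mem_singleton]
        constructor
        · rintro ⟨rfl | rfl, hx⟩
          · exact absurd hx (G.irrefl)
          · rfl
        · rintro rfl; exact ⟨Or.inr rfl, hadj⟩
      have h2 : ({u, v} : Finset V).filter (G.Adj v) = {u} := by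
        ext x; simp only [mem_filter, mem_insert, mem_singleton]
        constructor
        · rintro ⟨rfl | rfl, hx⟩
          · rfl
          · exact absurd hx (G.irrefl)
        · rintro rfl; exact ⟨Or.inl rfl, hadj.symm⟩
      rw [h1, h2, card_singleton, card_singleton]
    · have h1 : ({u, v} : Finset V).filter (G.Adj u) = ∅ := by
        ext x; simp only [mem_filter, mem_insert, mem_singleton, notMem_empty, iff_false]
        rintro ⟨rfl | rfl, hx⟩
        · exact G.irrefl hx
        · exact hadj hx
      have h2 : ({u, v} : Finset V).filter (G.Adj v) = ∅ := by
        ext x; simp only [mem_filter, mem_insert, mem_singleton, notMem_empty, iff_false]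
        rintro ⟨rfl | rfl, hx⟩
        · exact hadj hx.symm
        · exact G.irrefl hx
      rw [h1, h2]
  rw [hdeg u, hdeg v, hfil, hpair]
end

section
/- Let G be a finite simple graph on n ≥ 4 vertices with m ≥ 1 edges, and let c be an integer with 2 ≤ c ≤ n − 1. Then there exists a vertex subset S of cardinality c such that, as real numbers, e(S) ≥ ((c−2)/(n−2))·[ ((n−c)/(n−3))·( Σ_{v ∈ V(G)} d(v)(d(v)−1) / m ) + ((c−3)/(n−3))·(m−1) ] + 1. -/
open Finset

lemma count_supersets {α : Type*} [DecidableEq α] [Fintype α] {c : ℕ} (T : Finset α)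
    (hc : T.card ≤ c) :
    ((Finset.univ.powersetCard c).filter (T ⊆ ·)).card
      = (Fintype.card α - T.card).choose (c - T.card) := by
  have : (Fintype.card α - T.card).choose (c - T.card)
      = ((Finset.univ \ T).powersetCard (c - T.card)).card := by
    rw [Finset.card_powersetCard, Finset.card_sdiff_of_subset (Finset.subset_univ T), Finset.card_univ]
  rw [this]
  apply Finset.card_bij' (fun S _ => S \ T) (fun U _ => U ∪ T)
  · intro S hS
    simp only [Finset.mem_filter, Finset.mem_powersetCard] at hS
    simp only [Finset.mem_powersetCard]
    exact ⟨Finset.sdiff_subset_sdiff hS.1.1 le_rfl,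
      by rw [Finset.card_sdiff_of_subset hS.2, hS.1.2]⟩
  · intro U hU
    simp only [Finset.mem_powersetCard] at hU
    have hdisj : Disjoint U T := Finset.disjoint_of_subset_left hU.1 Finset.sdiff_disjoint
    simp only [Finset.mem_filter, Finset.mem_powersetCard]
    refine ⟨⟨Finset.subset_univ _, ?_⟩, Finset.subset_union_right⟩
    rw [Finset.card_union_of_disjoint hdisj, hU.2]
    omega
  · intro S hS
    simp only [Finset.mem_filter, Finset.mem_powersetCard] at hS
    exact Finset.sdiff_union_of_subset hS.2
  · intro U hU
    simp only [Finset.mem_powersetCard] at hU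
    exact Finset.union_sdiff_cancel_right (Finset.disjoint_of_subset_left hU.1 Finset.sdiff_disjoint)

lemma mem_sym2_iff_subset {α : Type*} [DecidableEq α] [Fintype α] {x : Sym2 α} {S : Finset α} :
    x ∈ S.sym2 ↔ Finset.univ.filter (· ∈ x) ⊆ S := by
  rw [Finset.mem_sym2_iff]
  constructor
  · intro h v hv
    simp only [Finset.mem_filter] at hv
    exact h v hv.2
  · intro h v hv
    exact h (by simp [hv])

lemma card_vertexSet {α : Type*} [DecidableEq α] [Fintype α] {x : Sym2 α} (h : ¬ x.IsDiag) :
    (Finset.univ.filter (· ∈ x)).card = 2 := by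
  induction x using Sym2.ind with
  | _ a b =>
    have hab : a ≠ b := by simpa using h
    have : Finset.univ.filter (· ∈ s(a, b)) = {a, b} := by
      ext v; simp [Sym2.mem_iff]
    rw [this, Finset.card_insert_of_notMem (by simpa using hab), Finset.card_singleton]

lemma inter_card_le_one {α : Type*} [DecidableEq α] [Fintype α] {x y : Sym2 α} (hxy : x ≠ y) :
    ((Finset.univ.filter (· ∈ x)) ∩ (Finset.univ.filter (· ∈ y))).card ≤ 1 := by
  by_contra h
  rw [not_le] at h
  obtain ⟨u, hu, w, hw, huw⟩ := Finset.one_lt_card.mp h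
  simp only [Finset.mem_inter, Finset.mem_filter] at hu hw
  have hx : x = s(u, w) := ((Sym2.mem_and_mem_iff huw).mp ⟨hu.1.2, hw.1.2⟩)
  have hy : y = s(u, w) := ((Sym2.mem_and_mem_iff huw).mp ⟨hu.2.2, hw.2.2⟩)
  exact hxy (hx.trans hy.symm)

lemma boole_mul' {p q : Prop} [Decidable p] [Decidable q] :
    (if p then (1:ℕ) else 0) * (if q then 1 else 0) = if p ∧ q then 1 else 0 := by
  by_cases hp : p <;> by_cases hq : q <;> simp [hp, hq]

section Main
variable {V : Type*} [Fintype V] [DecidableEq V] (G : SimpleGraph V) [DecidableRel G.Adj]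

lemma pair_count_s2 {c : ℕ} (hc : 2 ≤ c) {x y : Sym2 V} (hx : x ∈ G.edgeFinset)
    (hy : y ∈ G.edgeFinset) (hxy : x ≠ y) :
    (((Finset.univ.powersetCard c)).filter (fun S => x ∈ S.sym2 ∧ y ∈ S.sym2)).card
      = if (∃ v, v ∈ x ∧ v ∈ y) then
          (if 3 ≤ c then (Fintype.card V - 3).choose (c - 3) else 0)
        else (if 4 ≤ c then (Fintype.card V - 4).choose (c - 4) else 0) := by
  classical
  set Vx := Finset.univ.filter (· ∈ x) with hVx
  set Vy := Finset.univ.filter (· ∈ y) with hVy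
  have hdx : ¬ x.IsDiag := G.not_isDiag_of_mem_edgeSet (by simpa using hx)
  have hdy : ¬ y.IsDiag := G.not_isDiag_of_mem_edgeSet (by simpa using hy)
  have hcx : Vx.card = 2 := card_vertexSet hdx
  have hcy : Vy.card = 2 := card_vertexSet hdy
  have hfe : ((Finset.univ.powersetCard c)).filter (fun S => x ∈ S.sym2 ∧ y ∈ S.sym2)
      = ((Finset.univ.powersetCard c)).filter ((Vx ∪ Vy) ⊆ ·) := by
    apply Finset.filter_congr
    intro S _
    rw [mem_sym2_iff_subset, mem_sym2_iff_subset, Finset.union_subset_iff]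
  have hsum : (Vx ∪ Vy).card + (Vx ∩ Vy).card = 4 := by
    rw [Finset.card_union_add_card_inter, hcx, hcy]
  by_cases hshare : ∃ v, v ∈ x ∧ v ∈ y
  · have hint : (Vx ∩ Vy).card = 1 := by
      obtain ⟨v, hv1, hv2⟩ := hshare
      have h1 : v ∈ Vx ∩ Vy := by simp [hVx, hVy, hv1, hv2]
      have := inter_card_le_one (α := V) hxy
      rw [← hVx, ← hVy] at this
      have h2 : 0 < (Vx ∩ Vy).card := Finset.card_pos.mpr ⟨v, h1⟩
      omega
    have hu : (Vx ∪ Vy).card = 3 := by omega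
    rw [if_pos hshare, hfe]
    by_cases h3 : 3 ≤ c
    · rw [count_supersets _ (hu ▸ h3), hu, if_pos h3]
    · rw [if_neg h3, Finset.card_eq_zero, Finset.filter_eq_empty_iff]
      rintro S hS hTS
      rw [Finset.mem_powersetCard] at hS
      have := Finset.card_le_card hTS
      omega
  · have hint : (Vx ∩ Vy).card = 0 := by
      rw [Finset.card_eq_zero, Finset.eq_empty_iff_forall_notMem]
      intro v hv
      simp only [hVx, hVy, Finset.mem_inter, Finset.mem_filter] at hv
      exact hshare ⟨v, hv.1.2, hv.2.2⟩
    have hu : (Vx ∪ Vy).card = 4 := by omega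
    rw [if_neg hshare, hfe]
    by_cases h4 : 4 ≤ c
    · rw [count_supersets _ (hu ▸ h4), hu, if_pos h4]
    · rw [if_neg h4, Finset.card_eq_zero, Finset.filter_eq_empty_iff]
      rintro S hS hTS
      rw [Finset.mem_powersetCard] at hS
      have := Finset.card_le_card hTS
      omega

lemma single_count {c : ℕ} (hc : 2 ≤ c) {x : Sym2 V} (hx : x ∈ G.edgeFinset) :
    (((Finset.univ.powersetCard c)).filter (fun S => x ∈ S.sym2)).card
      = (Fintype.card V - 2).choose (c - 2) := by
  classical
  have hdx : ¬ x.IsDiag := G.not_isDiag_of_mem_edgeSet (by simpa using hx)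
  have hcx : (Finset.univ.filter (· ∈ x)).card = 2 := card_vertexSet hdx
  have hfe : ((Finset.univ.powersetCard c)).filter (fun S => x ∈ S.sym2)
      = ((Finset.univ.powersetCard c)).filter ((Finset.univ.filter (· ∈ x)) ⊆ ·) := by
    apply Finset.filter_congr
    intro S _
    rw [mem_sym2_iff_subset]
  rw [hfe, count_supersets _ (hcx ▸ hc), hcx]

lemma sum_inducedSize {c : ℕ} (hc : 2 ≤ c) :
    ∑ S ∈ Finset.univ.powersetCard c, inducedSize G S
      = G.edgeFinset.card * (Fintype.card V - 2).choose (c - 2) := by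
  unfold inducedSize
  simp_rw [Finset.card_filter]
  rw [Finset.sum_comm]
  rw [Finset.sum_congr rfl (fun x hx => by
    rw [← Finset.card_filter, single_count G hc hx])]
  rw [Finset.sum_const, smul_eq_mul]

lemma sum_inducedSize_sq {c : ℕ} (hc : 2 ≤ c) :
    ∑ S ∈ Finset.univ.powersetCard c, (inducedSize G S)^2
      = G.edgeFinset.card * (Fintype.card V - 2).choose (c - 2)
      + (∑ x ∈ G.edgeFinset,
          ((G.edgeFinset.erase x).filter (fun y => ∃ v, v ∈ x ∧ v ∈ y)).card)
          * (if 3 ≤ c then (Fintype.card V - 3).choose (c - 3) else 0)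
      + (∑ x ∈ G.edgeFinset,
          ((G.edgeFinset.erase x).filter (fun y => ¬ ∃ v, v ∈ x ∧ v ∈ y)).card)
          * (if 4 ≤ c then (Fintype.card V - 4).choose (c - 4) else 0) := by
  have hsq : ∀ S : Finset V, (inducedSize G S)^2
      = ∑ x ∈ G.edgeFinset, ∑ y ∈ G.edgeFinset,
          (if x ∈ S.sym2 ∧ y ∈ S.sym2 then 1 else 0) := by
    intro S
    rw [sq]
    unfold inducedSize
    rw [Finset.card_filter, Finset.sum_mul_sum]
    simp_rw [boole_mul']
  simp_rw [hsq]
  rw [Finset.sum_comm]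
  rw [Finset.sum_congr rfl (fun x hx => Finset.sum_comm)]
  have hinner : ∀ x ∈ G.edgeFinset,
      (∑ y ∈ G.edgeFinset, ∑ S ∈ Finset.univ.powersetCard c,
        (if x ∈ S.sym2 ∧ y ∈ S.sym2 then 1 else 0))
      = (Fintype.card V - 2).choose (c - 2)
        + ((G.edgeFinset.erase x).filter (fun y => ∃ v, v ∈ x ∧ v ∈ y)).card
            * (if 3 ≤ c then (Fintype.card V - 3).choose (c - 3) else 0)
        + ((G.edgeFinset.erase x).filter (fun y => ¬ ∃ v, v ∈ x ∧ v ∈ y)).card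
            * (if 4 ≤ c then (Fintype.card V - 4).choose (c - 4) else 0) := by
    intro x hx
    rw [← Finset.add_sum_erase _ _ hx, add_assoc]
    congr 1
    · have : ∀ S : Finset V, (if x ∈ S.sym2 ∧ x ∈ S.sym2 then (1:ℕ) else 0)
          = if x ∈ S.sym2 then 1 else 0 := fun S => by simp
      simp_rw [this]
      rw [← Finset.card_filter, single_count G hc hx]
    · rw [← Finset.sum_filter_add_sum_filter_not (G.edgeFinset.erase x)
        (fun y => ∃ v, v ∈ x ∧ v ∈ y)]
      congr 1
      · rw [Finset.sum_congr rfl (fun y hy => ?_), Finset.sum_const, smul_eq_mul]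
        simp only [Finset.mem_filter, Finset.mem_erase] at hy
        rw [← Finset.card_filter, pair_count_s2 G hc hx hy.1.2 (Ne.symm hy.1.1), if_pos hy.2]
      · rw [Finset.sum_congr rfl (fun y hy => ?_), Finset.sum_const, smul_eq_mul]
        simp only [Finset.mem_filter, Finset.mem_erase] at hy
        rw [← Finset.card_filter, pair_count_s2 G hc hx hy.1.2 (Ne.symm hy.1.1), if_neg hy.2]
  rw [Finset.sum_congr rfl hinner]
  rw [Finset.sum_add_distrib, Finset.sum_add_distrib, Finset.sum_const, smul_eq_mul,
    ← Finset.sum_mul, ← Finset.sum_mul]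

lemma sum_deg_sq :
    ∑ v : V, (G.degree v)^2 = 2 * G.edgeFinset.card
      + ∑ x ∈ G.edgeFinset,
          ((G.edgeFinset.erase x).filter (fun y => ∃ v, v ∈ x ∧ v ∈ y)).card := by
  classical
  have hdeg : ∀ v : V, G.degree v = (G.edgeFinset.filter (v ∈ ·)).card := by
    intro v
    rw [← SimpleGraph.card_incidenceFinset_eq_degree, SimpleGraph.incidenceFinset_eq_filter]
  have hsq : ∀ v : V, (G.degree v)^2
      = ∑ x ∈ G.edgeFinset, ∑ y ∈ G.edgeFinset, (if v ∈ x ∧ v ∈ y then 1 else 0) := by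
    intro v
    rw [sq, hdeg v, Finset.card_filter, Finset.sum_mul_sum]
    simp_rw [boole_mul']
  simp_rw [hsq]
  rw [Finset.sum_comm]
  rw [Finset.sum_congr rfl (fun x hx => Finset.sum_comm)]
  have hinner : ∀ x ∈ G.edgeFinset,
      (∑ y ∈ G.edgeFinset, ∑ v : V, (if v ∈ x ∧ v ∈ y then 1 else 0))
      = 2 + ((G.edgeFinset.erase x).filter (fun y => ∃ v, v ∈ x ∧ v ∈ y)).card := by
    intro x hx
    have hdx : ¬ x.IsDiag := G.not_isDiag_of_mem_edgeSet (by simpa using hx)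
    have hval : ∀ y ∈ G.edgeFinset.erase x,
        (∑ v : V, (if v ∈ x ∧ v ∈ y then (1:ℕ) else 0))
        = if (∃ v, v ∈ x ∧ v ∈ y) then 1 else 0 := by
      intro y hy
      rw [Finset.mem_erase] at hy
      rw [← Finset.card_filter]
      by_cases hsh : ∃ v, v ∈ x ∧ v ∈ y
      · rw [if_pos hsh]
        have h1 : (Finset.univ.filter (fun v => v ∈ x ∧ v ∈ y)).card ≤ 1 := by
          have := inter_card_le_one (α := V) (Ne.symm hy.1)
          rwa [← Finset.filter_and] at this
        obtain ⟨v, hv⟩ := hsh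
        have h2 : 0 < (Finset.univ.filter (fun v => v ∈ x ∧ v ∈ y)).card :=
          Finset.card_pos.mpr ⟨v, by simp [hv.1, hv.2]⟩
        omega
      · rw [if_neg hsh, Finset.card_eq_zero, Finset.filter_eq_empty_iff]
        intro v _
        exact fun hv => hsh ⟨v, hv⟩
    rw [← Finset.add_sum_erase _ _ hx]
    congr 1
    · have : ∀ v : V, (if v ∈ x ∧ v ∈ x then (1:ℕ) else 0) = if v ∈ x then 1 else 0 :=
        fun v => by simp
      simp_rw [this]
      rw [← Finset.card_filter]
      exact card_vertexSet hdx
    · rw [Finset.sum_congr rfl hval, ← Finset.card_filter]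
  rw [Finset.sum_congr rfl hinner, Finset.sum_add_distrib, Finset.sum_const, smul_eq_mul, mul_comm]

end Main
/-- A graph of order `n ≥ 4` and size `m ≥ 1` has, for every `2 ≤ c ≤ n - 1`, an induced
subgraph on `c` vertices of size at least
`((c-2)/(n-2)) * [ ((n-c)/(n-3)) * (Σ_v d(v)(d(v)-1) / m) + ((c-3)/(n-3)) * (m-1) ] + 1`. -/
theorem stmt_2 {V : Type*} [Fintype V] [DecidableEq V] (G : SimpleGraph V)
    [DecidableRel G.Adj] (hn : 4 ≤ Fintype.card V) (hm : 1 ≤ G.edgeFinset.card)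
    (c : ℕ) (hc2 : 2 ≤ c) (hcn : c ≤ Fintype.card V - 1) :
    ∃ S : Finset V, S.card = c ∧
      ((c : ℝ) - 2) / ((Fintype.card V : ℝ) - 2) *
        ( ((Fintype.card V : ℝ) - c) / ((Fintype.card V : ℝ) - 3) *
            ((∑ v : V, (G.degree v : ℝ) * ((G.degree v : ℝ) - 1)) / (G.edgeFinset.card : ℝ))
          + ((c : ℝ) - 3) / ((Fintype.card V : ℝ) - 3) * ((G.edgeFinset.card : ℝ) - 1) )
      + 1 ≤ (inducedSize G S : ℝ) := by
  classical
  obtain ⟨n, hn'⟩ : ∃ n, n = Fintype.card V := ⟨_, rfl⟩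
  obtain ⟨m, hm'⟩ : ∃ m, m = G.edgeFinset.card := ⟨_, rfl⟩
  have hcn' : c ≤ n - 1 := hn' ▸ hcn
  have hn4 : 4 ≤ n := hn' ▸ hn
  have hm1 : 1 ≤ m := hm' ▸ hm
  -- the collection of c-subsets is nonempty; pick a maximizer
  have hSne : ((Finset.univ : Finset V).powersetCard c).Nonempty := by
    rw [← Finset.card_pos, Finset.card_powersetCard, Finset.card_univ]
    exact Nat.choose_pos (by omega)
  obtain ⟨S₀, hS₀mem, hS₀max⟩ := Finset.exists_max_image _ (inducedSize G) hSne
  refine ⟨S₀, (Finset.mem_powersetCard.mp hS₀mem).2, ?_⟩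
  -- natural number counting facts
  have hA := sum_inducedSize G hc2
  have hB := sum_inducedSize_sq G hc2
  have hC := sum_deg_sq G
  rw [← hn', ← hm'] at hA hB
  rw [← hm'] at hC
  set N2 := (n - 2).choose (c - 2) with hN2
  set N3 := (if 3 ≤ c then (n - 3).choose (c - 3) else 0) with hN3
  set N4 := (if 4 ≤ c then (n - 4).choose (c - 4) else 0) with hN4
  set P3 := ∑ x ∈ G.edgeFinset,
      ((G.edgeFinset.erase x).filter (fun y => ∃ v, v ∈ x ∧ v ∈ y)).card with hP3
  set Q4 := ∑ x ∈ G.edgeFinset,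
      ((G.edgeFinset.erase x).filter (fun y => ¬ ∃ v, v ∈ x ∧ v ∈ y)).card with hQ4
  have hD : P3 + Q4 = m * (m - 1) := by
    rw [hP3, hQ4, ← Finset.sum_add_distrib]
    rw [Finset.sum_congr rfl (fun x hx => ?_)]
    · rw [Finset.sum_const, smul_eq_mul, ← hm']
    · rw [Finset.card_filter_add_card_filter_not, Finset.card_erase_of_mem hx, ← hm']
  have hmax_nat : m * N2 + P3 * N3 + Q4 * N4 ≤ inducedSize G S₀ * (m * N2) := by
    calc m * N2 + P3 * N3 + Q4 * N4
        = ∑ S ∈ Finset.univ.powersetCard c, (inducedSize G S)^2 := hB.symm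
      _ ≤ ∑ S ∈ Finset.univ.powersetCard c, inducedSize G S₀ * inducedSize G S := by
          refine Finset.sum_le_sum fun S hS => ?_
          rw [sq]
          exact Nat.mul_le_mul_right _ (hS₀max S hS)
      _ = inducedSize G S₀ * (m * N2) := by rw [← Finset.mul_sum, hA]
  -- cast to the reals
  have h2n : ((n - 2 : ℕ) : ℝ) = (n : ℝ) - 2 := by
    rw [Nat.cast_sub (by omega)]; norm_num
  have h3n : ((n - 3 : ℕ) : ℝ) = (n : ℝ) - 3 := by
    rw [Nat.cast_sub (by omega)]; norm_num
  have e3 : (N3 : ℝ) * ((n : ℝ) - 2) = (N2 : ℝ) * ((c : ℝ) - 2) := by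
    by_cases h3 : 3 ≤ c
    · have hnat : (n - 2) * ((n - 3).choose (c - 3)) = ((n - 2).choose (c - 2)) * (c - 2) := by
        have h := Nat.add_one_mul_choose_eq (n - 3) (c - 3)
        rwa [show n - 3 + 1 = n - 2 from by omega, show c - 3 + 1 = c - 2 from by omega] at h
      rw [hN3, if_pos h3, hN2]
      have := congrArg (fun k : ℕ => (k : ℝ)) hnat
      push_cast [Nat.cast_sub (show 2 ≤ n by omega), Nat.cast_sub (show 2 ≤ c by omega)] at this
      linarith
    · have hc2' : c = 2 := by omega
      rw [hN3, if_neg h3]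
      simp [hc2']
  have e4 : (N4 : ℝ) * ((n : ℝ) - 3) = (N3 : ℝ) * ((c : ℝ) - 3) := by
    by_cases h4 : 4 ≤ c
    · have hnat : (n - 3) * ((n - 4).choose (c - 4)) = ((n - 3).choose (c - 3)) * (c - 3) := by
        have h := Nat.add_one_mul_choose_eq (n - 4) (c - 4)
        rwa [show n - 4 + 1 = n - 3 from by omega, show c - 4 + 1 = c - 3 from by omega] at h
      rw [hN4, if_pos h4, hN3, if_pos (by omega : 3 ≤ c)]
      have := congrArg (fun k : ℕ => (k : ℝ)) hnat
      push_cast [Nat.cast_sub (show 3 ≤ n by omega), Nat.cast_sub (show 3 ≤ c by omega)] at this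
      linarith
    · rw [hN4, if_neg h4]
      have : c = 2 ∨ c = 3 := by omega
      rcases this with h | h
      · rw [hN3, if_neg (by omega)]
        simp
      · simp [h]
  have eq4 : (P3 : ℝ) + (Q4 : ℝ) = (m : ℝ) * ((m : ℝ) - 1) := by
    have := congrArg (fun k : ℕ => (k : ℝ)) hD
    push_cast [Nat.cast_sub (show 1 ≤ m by omega)] at this
    linarith
  have hdegsum : (∑ v : V, (G.degree v : ℝ)) = 2 * (m : ℝ) := by
    have := G.sum_degrees_eq_twice_card_edges
    rw [← hm'] at this
    exact_mod_cast congrArg (fun k : ℕ => (k : ℝ)) this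
  have hdegsq : (∑ v : V, (G.degree v : ℝ)^2) = 2 * (m : ℝ) + (P3 : ℝ) := by
    exact_mod_cast congrArg (fun k : ℕ => (k : ℝ)) hC
  have eP3 : (∑ v : V, (G.degree v : ℝ) * ((G.degree v : ℝ) - 1)) = (P3 : ℝ) := by
    have : (∑ v : V, (G.degree v : ℝ) * ((G.degree v : ℝ) - 1))
        = (∑ v : V, (G.degree v : ℝ)^2) - (∑ v : V, (G.degree v : ℝ)) := by
      rw [← Finset.sum_sub_distrib]
      exact Finset.sum_congr rfl fun v _ => by ring
    rw [this, hdegsq, hdegsum]; ring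
  have hmaxR : (m : ℝ) * N2 + (P3 : ℝ) * N3 + (Q4 : ℝ) * N4
      ≤ (inducedSize G S₀ : ℝ) * ((m : ℝ) * N2) := by exact_mod_cast hmax_nat
  have hN2pos : (0 : ℝ) < (N2 : ℝ) := by
    rw [hN2]
    exact_mod_cast Nat.choose_pos (by omega : c - 2 ≤ n - 2)
  have hmpos : (0 : ℝ) < (m : ℝ) := by exact_mod_cast hm1
  have hn2 : ((n : ℝ) - 2) ≠ 0 := by
    have : (4 : ℝ) ≤ (n : ℝ) := by exact_mod_cast hn4
    linarith
  have hn3 : ((n : ℝ) - 3) ≠ 0 := by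
    have : (4 : ℝ) ≤ (n : ℝ) := by exact_mod_cast hn4
    linarith
  have hN3' : (N3 : ℝ) = (N2 : ℝ) * ((c : ℝ) - 2) / ((n : ℝ) - 2) := by
    field_simp
    linarith [e3]
  have hN4' : (N4 : ℝ) = (N3 : ℝ) * ((c : ℝ) - 3) / ((n : ℝ) - 3) := by
    field_simp
    linarith [e4]
  have hQ4' : (Q4 : ℝ) = (m : ℝ) * ((m : ℝ) - 1) - (P3 : ℝ) := by linarith [eq4]
  rw [← hn', ← hm', eP3]
  have key : ((c : ℝ) - 2) / ((n : ℝ) - 2) *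
        ( ((n : ℝ) - c) / ((n : ℝ) - 3) * ((P3 : ℝ) / (m : ℝ))
          + ((c : ℝ) - 3) / ((n : ℝ) - 3) * ((m : ℝ) - 1) ) + 1
      = ((m : ℝ) * N2 + (P3 : ℝ) * N3 + (Q4 : ℝ) * N4) / ((m : ℝ) * N2) := by
    rw [hQ4', hN4', hN3']
    field_simp
    ring
  rw [key, div_le_iff₀ (by positivity)]
  linarith [hmaxR]
end

section
/- Every tree T on n ≥ 2 vertices has at most 1 + 2^(n−1) independent sets, where an independent set is any subset of V(T) (the empty set included) containing no two adjacent vertices. Moreover, equality holds if and only if T is a star, i.e., one vertex adjacent to all other n − 1 vertices and no other edges. -/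
open Finset

/-- `G` is a star: one center vertex adjacent to all other vertices, and no other edges. -/
def IsStarGraph {V : Type*} (G : SimpleGraph V) : Prop :=
  ∃ v : V, ∀ a b : V, G.Adj a b ↔ a ≠ b ∧ (a = v ∨ b = v)

lemma card_supersets {V : Type*} [DecidableEq V] (M t : Finset V) (ht : t ⊆ M) :
    (M.powerset.filter (fun S => t ⊆ S)).card = 2 ^ (M.card - t.card) := by
  have : (M.powerset.filter (fun S => t ⊆ S)).card = ((M \ t).powerset).card := by
    apply Finset.card_nbij' (fun S => S \ t) (fun S => S ∪ t)
    · intro S hS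
      simp only [mem_coe, mem_filter, mem_powerset] at hS ⊢
      exact sdiff_subset_sdiff hS.1 le_rfl
    · intro S hS
      simp only [mem_coe, mem_filter, mem_powerset] at hS ⊢
      exact ⟨union_subset (hS.trans sdiff_subset) ht, subset_union_right⟩
    · intro S hS
      simp only [mem_coe, mem_filter, mem_powerset] at hS
      dsimp only
      rw [sdiff_union_of_subset hS.2]
    · intro S hS
      simp only [mem_coe, mem_powerset] at hS
      dsimp only
      rw [union_sdiff_right, Finset.sdiff_eq_self_iff_disjoint.2
        (Finset.sdiff_disjoint.mono_left hS)]
  rw [this, Finset.card_powerset, Finset.card_sdiff_of_subset ht]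

lemma adj_center {V : Type*} {T : SimpleGraph V} {v : V} (hc : T.Connected)
    (h : ∀ a b : V, T.Adj a b → a = v ∨ b = v) : ∀ u : V, u ≠ v → T.Adj v u := by
  intro u hu
  obtain ⟨w⟩ := hc.preconnected u v
  cases w with
  | nil => exact absurd rfl hu
  | cons h' p =>
    rename_i x
    rcases h u x h' with h1 | h2
    · exact absurd h1 hu
    · exact (h2 ▸ h').symm

lemma star_of {V : Type*} {T : SimpleGraph V} {v : V} (hc : T.Connected)
    (h : ∀ a b : V, T.Adj a b → a = v ∨ b = v) : IsStarGraph T := by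
  refine ⟨v, fun a b => ⟨fun hab => ⟨hab.ne, (h a b hab).imp id id⟩, ?_⟩⟩
  rintro ⟨hne, rfl | rfl⟩
  · exact (adj_center hc h b hne.symm)
  · exact (adj_center hc h a hne).symm

/-- Every tree on `n ≥ 2` vertices has at most `1 + 2^(n-1)` independent sets (the empty
set included), with equality exactly for stars. -/
theorem stmt_4 {V : Type*} [Fintype V] (T : SimpleGraph V) (hT : T.IsTree)
    (hn : 2 ≤ Fintype.card V) :
    {S : Finset V | ∀ a ∈ S, ∀ b ∈ S, ¬ T.Adj a b}.ncard ≤ 1 + 2 ^ (Fintype.card V - 1) ∧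
    ({S : Finset V | ∀ a ∈ S, ∀ b ∈ S, ¬ T.Adj a b}.ncard = 1 + 2 ^ (Fintype.card V - 1) ↔
      IsStarGraph T) := by
  classical
  set F : Finset (Finset V) :=
    Finset.univ.filter (fun S : Finset V => ∀ a ∈ S, ∀ b ∈ S, ¬ T.Adj a b) with hF
  have hset : {S : Finset V | ∀ a ∈ S, ∀ b ∈ S, ¬ T.Adj a b} = ↑F := by
    ext S; simp [hF]
  rw [hset, Set.ncard_coe_finset]
  by_cases hstar : IsStarGraph T
  · -- star case: exact count
    obtain ⟨c, st⟩ := hstar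
    have hFeq : F = (Finset.univ.erase c).powerset ∪ {({c} : Finset V)} := by
      ext S
      simp only [hF, mem_filter, mem_union, mem_powerset, mem_singleton, mem_univ, true_and]
      constructor
      · intro hind
        by_cases hc : c ∈ S
        · right
          ext u
          simp only [mem_singleton]
          constructor
          · intro hu
            by_contra hne
            exact hind u hu c hc ((st u c).2 ⟨hne, Or.inr rfl⟩)
          · rintro rfl; exact hc
        · left
          intro u hu
          exact mem_erase.2 ⟨fun h => hc (h ▸ hu), mem_univ u⟩
      · rintro (hsub | rfl)
        · intro a ha b hb hab
          rcases ((st a b).1 hab).2 with rfl | rfl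
          · exact (mem_erase.1 (hsub ha)).1 rfl
          · exact (mem_erase.1 (hsub hb)).1 rfl
        · intro a ha b hb hab
          rw [mem_singleton] at ha hb
          subst ha; subst hb
          exact T.irrefl hab
    have hdisj : Disjoint ((Finset.univ.erase c).powerset) ({({c} : Finset V)}) := by
      rw [Finset.disjoint_singleton_right, mem_powerset, singleton_subset_iff]
      intro h
      exact (mem_erase.1 h).1 rfl
    have hcard : F.card = 1 + 2 ^ (Fintype.card V - 1) := by
      rw [hFeq, Finset.card_union_of_disjoint hdisj, Finset.card_powerset,
        Finset.card_erase_of_mem (mem_univ c), Finset.card_univ, Finset.card_singleton]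
      omega
    exact ⟨le_of_eq hcard, ⟨fun _ => ⟨c, st⟩, fun _ => hcard⟩⟩
  · -- non-star case: strict bound
    have hn3 : 3 ≤ Fintype.card V := by
      by_contra h
      have h2 : (Finset.univ : Finset V).card = 2 := by rw [Finset.card_univ]; omega
      obtain ⟨a, b, hab, huniv⟩ := Finset.card_eq_two.1 h2
      refine hstar (star_of (v := a) hT.isConnected ?_)
      intro x y hxy
      have hx : x = a ∨ x = b := by
        have hx' : x ∈ (Finset.univ : Finset V) := Finset.mem_univ x
        rw [huniv, Finset.mem_insert, Finset.mem_singleton] at hx'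
        exact hx'
      have hy : y = a ∨ y = b := by
        have hy' : y ∈ (Finset.univ : Finset V) := Finset.mem_univ y
        rw [huniv, Finset.mem_insert, Finset.mem_singleton] at hy'
        exact hy'
      rcases hx with rfl | rfl
      · exact Or.inl rfl
      · rcases hy with rfl | rfl
        · exact Or.inr rfl
        · exact absurd rfl hxy.ne
    obtain ⟨c, hc2⟩ : ∃ c, 2 ≤ T.degree c := by
      by_contra h
      push_neg at h
      have hedge := hT.card_edgeFinset
      have hsum : ∑ v, T.degree v = 2 * (Fintype.card V - 1) := by
        rw [T.sum_degrees_eq_twice_card_edges]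
        omega
      have hle : ∑ v, T.degree v ≤ ∑ _v : V, 1 :=
        Finset.sum_le_sum (fun v _ => Nat.lt_succ_iff.1 (h v))
      simp only [Finset.sum_const, Finset.card_univ, smul_eq_mul, mul_one] at hle
      omega
    obtain ⟨x, y, hxy, hxc, hyc⟩ : ∃ x y, T.Adj x y ∧ x ≠ c ∧ y ≠ c := by
      by_contra h
      push_neg at h
      refine hstar (star_of (v := c) hT.isConnected ?_)
      intro a b hab
      by_cases ha : a = c
      · exact Or.inl ha
      · exact Or.inr (h a b hab ha)
    set A : Finset (Finset V) :=
      ((Finset.univ.erase c).powerset).filter (fun S => ¬ ({x, y} : Finset V) ⊆ S) with hA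
    set B : Finset (Finset V) :=
      ((Finset.univ \ T.neighborFinset c).powerset).filter (fun S => c ∈ S) with hB
    have hsub : F ⊆ A ∪ B := by
      intro S hS
      rw [hF, mem_filter] at hS
      have hind := hS.2
      by_cases hcS : c ∈ S
      · refine mem_union_right _ ?_
        rw [hB, mem_filter, mem_powerset]
        refine ⟨fun u hu => ?_, hcS⟩
        rw [mem_sdiff]
        refine ⟨mem_univ u, fun hadj => ?_⟩
        rw [SimpleGraph.mem_neighborFinset] at hadj
        exact hind c hcS u hu hadj
      · refine mem_union_left _ ?_
        rw [hA, mem_filter, mem_powerset]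
        constructor
        · intro u hu
          exact mem_erase.2 ⟨fun h => hcS (h ▸ hu), mem_univ u⟩
        · intro hsub'
          rw [Finset.insert_subset_iff, Finset.singleton_subset_iff] at hsub'
          exact hind x hsub'.1 y hsub'.2 hxy
    have hxyC : ({x, y} : Finset V) ⊆ Finset.univ.erase c := by
      intro u hu
      rcases Finset.mem_insert.1 hu with rfl | hu'
      · exact mem_erase.2 ⟨hxc, mem_univ u⟩
      · rw [Finset.mem_singleton] at hu'
        subst hu'
        exact mem_erase.2 ⟨hyc, mem_univ u⟩
    have hcardxy : ({x, y} : Finset V).card = 2 := by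
      rw [Finset.card_insert_of_notMem (by simpa using hxy.ne), Finset.card_singleton]
    have hAcard : A.card = 2 ^ (Fintype.card V - 1) - 2 ^ (Fintype.card V - 3) := by
      have hsplit := Finset.card_filter_add_card_filter_not
        (s := (Finset.univ.erase c).powerset) (p := fun S => ({x, y} : Finset V) ⊆ S)
      have h1 := card_supersets (Finset.univ.erase c) {x, y} hxyC
      rw [hcardxy, Finset.card_erase_of_mem (mem_univ c), Finset.card_univ] at h1
      rw [hA]
      have hpow : (Finset.univ.erase c).powerset.card = 2 ^ (Fintype.card V - 1) := by
        rw [Finset.card_powerset, Finset.card_erase_of_mem (mem_univ c), Finset.card_univ]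
      have hexp : Fintype.card V - 1 - 2 = Fintype.card V - 3 := by omega
      rw [hexp] at h1
      omega
    have hcN : c ∈ Finset.univ \ T.neighborFinset c := by
      rw [mem_sdiff]
      refine ⟨mem_univ c, fun h => ?_⟩
      rw [SimpleGraph.mem_neighborFinset] at h
      exact T.irrefl h
    have hBcard : B.card = 2 ^ (Fintype.card V - T.degree c - 1) := by
      have h1 := card_supersets (Finset.univ \ T.neighborFinset c) {c}
        (Finset.singleton_subset_iff.2 hcN)
      rw [Finset.card_singleton, Finset.card_sdiff_of_subset (Finset.subset_univ _),
        Finset.card_univ, T.card_neighborFinset_eq_degree] at h1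
      rw [hB, ← h1]
      congr 1
      apply Finset.filter_congr
      intro S _
      simp [Finset.singleton_subset_iff]
    have hBle : B.card ≤ 2 ^ (Fintype.card V - 3) := by
      rw [hBcard]
      exact Nat.pow_le_pow_right (by norm_num) (by omega)
    have hApos : (1 : ℕ) ≤ 2 ^ (Fintype.card V - 3) := Nat.one_le_two_pow
    have hpow13 : 2 ^ (Fintype.card V - 3) ≤ 2 ^ (Fintype.card V - 1) :=
      Nat.pow_le_pow_right (by norm_num) (by omega)
    have hFle : F.card ≤ 2 ^ (Fintype.card V - 1) := by
      calc F.card ≤ (A ∪ B).card := Finset.card_le_card hsub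
        _ ≤ A.card + B.card := Finset.card_union_le A B
        _ ≤ (2 ^ (Fintype.card V - 1) - 2 ^ (Fintype.card V - 3))
              + 2 ^ (Fintype.card V - 3) := by omega
        _ ≤ 2 ^ (Fintype.card V - 1) := by omega
    refine ⟨by omega, ⟨fun h => absurd h (by omega), fun h => absurd h hstar⟩⟩
end

section
/- (Petrov's inequality) Let M be a random variable on a probability space taking only finitely many values, all nonnegative integers, and let t be an integer with 1 ≤ t ≤ E[M]. Then P(M ≥ t) ≥ (E[M] − t + 1)² / E[M²]. -/
open MeasureTheory

/-- Petrov's inequality: for a finitely-valued nonnegative-integer random variable `M`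
and an integer `t` with `1 ≤ t ≤ E[M]`, `P(M ≥ t) ≥ (E[M] - t + 1)² / E[M²]`. -/
theorem stmt_10 {Ω : Type*} [MeasurableSpace Ω] (μ : Measure Ω) [IsProbabilityMeasure μ]
    (M : Ω → ℕ) (hM : Measurable M) (hfin : (Set.range M).Finite)
    (t : ℕ) (ht1 : 1 ≤ t) (ht2 : (t : ℝ) ≤ ∫ ω, (M ω : ℝ) ∂μ) :
    ((∫ ω, (M ω : ℝ) ∂μ) - (t : ℝ) + 1) ^ 2 / (∫ ω, (M ω : ℝ) ^ 2 ∂μ) ≤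
      (μ {ω | t ≤ M ω}).toReal := by
  -- bound on M
  obtain ⟨C, hC⟩ : ∃ C : ℕ, ∀ ω, M ω ≤ C := by
    obtain ⟨C, hC⟩ := hfin.bddAbove
    exact ⟨C, fun ω => hC ⟨ω, rfl⟩⟩
  set A : Set Ω := {ω | t ≤ M ω} with hAdef
  have hA : MeasurableSet A := measurableSet_le measurable_const hM
  set f : Ω → ℝ := fun ω => (M ω : ℝ) with hfdef
  set g : Ω → ℝ := A.indicator (fun _ => (1 : ℝ)) with hgdef
  have hfmeas : Measurable f := measurable_from_top.comp hM
  have hgmeas : Measurable g := (measurable_const (a := (1:ℝ))).indicator hA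
  have hg01 : ∀ ω, g ω = 0 ∨ g ω = 1 := by
    intro ω
    by_cases h : ω ∈ A
    · right; simp [hgdef, Set.indicator_of_mem h]
    · left; simp [hgdef, Set.indicator_of_notMem h]
  have hgbd : ∀ ω, |g ω| ≤ 1 := by
    intro ω; rcases hg01 ω with h | h <;> simp [h]
  have hfnn : ∀ ω, 0 ≤ f ω := fun ω => Nat.cast_nonneg _
  have hfbd : ∀ ω, |f ω| ≤ C := by
    intro ω
    rw [abs_of_nonneg (hfnn ω)]
    simp only [hfdef]
    exact_mod_cast hC ω
  -- integrability helper
  have key : ∀ (h : Ω → ℝ) (D : ℝ), Measurable h → (∀ ω, |h ω| ≤ D) → Integrable h μ := by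
    intro h D hmeas hbd
    exact ⟨hmeas.aestronglyMeasurable,
      HasFiniteIntegral.of_bounded (C := D) (ae_of_all _ fun ω => by
        simpa [Real.norm_eq_abs] using hbd ω)⟩
  have hintf : Integrable f μ := key f C hfmeas hfbd
  have hintf2 : Integrable (fun ω => f ω ^ 2) μ := by
    refine key _ (C ^ 2) (hfmeas.pow_const 2) fun ω => ?_
    rw [abs_pow]
    exact pow_le_pow_left₀ (abs_nonneg _) (hfbd ω) 2
  have hintfg : Integrable (fun ω => f ω * g ω) μ := by
    refine key _ C (hfmeas.mul hgmeas) fun ω => ?_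
    rw [abs_mul]
    have h1 := hfbd ω; have h2 := hgbd ω
    nlinarith [abs_nonneg (f ω), abs_nonneg (g ω)]
  have hintg : Integrable g μ := key g 1 hgmeas hgbd
  set a : ℝ := ∫ ω, f ω ^ 2 ∂μ with hadef
  set b : ℝ := ∫ ω, f ω * g ω ∂μ with hbdef
  have hc : (∫ ω, g ω ∂μ) = (μ A).toReal := by
    rw [hgdef, integral_indicator hA]
    simp
    rfl
  set c : ℝ := (μ A).toReal with hcdef
  -- Step 1: E[f] - t + 1 ≤ b
  have step1 : (∫ ω, f ω ∂μ) - t + 1 ≤ b := by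
    have hpt : ∀ ω, f ω - t + 1 ≤ f ω * g ω := by
      intro ω
      by_cases h : ω ∈ A
      · have : g ω = 1 := Set.indicator_of_mem h _
        rw [this, mul_one]
        have ht1' : (1 : ℝ) ≤ t := by exact_mod_cast ht1
        linarith
      · have hg0 : g ω = 0 := Set.indicator_of_notMem h _
        have hlt : M ω < t := by simpa [hAdef, not_le] using h
        have : (M ω : ℝ) + 1 ≤ t := by exact_mod_cast hlt
        rw [hg0, mul_zero]
        simp only [hfdef]
        linarith
    have hint3 : Integrable (fun ω => f ω - (t : ℝ)) μ := hintf.sub (integrable_const _)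
    have hint4 : Integrable (fun ω => f ω - (t : ℝ) + 1) μ := hint3.add (integrable_const _)
    have hle : (∫ ω, f ω - t + 1 ∂μ) ≤ b := integral_mono hint4 hintfg hpt
    rwa [integral_add hint3 (integrable_const _),
      integral_sub hintf (integrable_const _), integral_const, integral_const,
      probReal_univ, one_smul, one_smul] at hle
  -- Cauchy–Schwarz via discriminant
  have hcs : b ^ 2 ≤ c * a := by
    have hquad : ∀ x : ℝ, 0 ≤ c * (x * x) + (-(2 * b)) * x + a := by
      intro x
      have hexp : ∀ ω, (x * g ω - f ω) ^ 2
          = (x * x) * g ω + (-(2 * b)) * 0 + (f ω ^ 2 - (2 * x) * (f ω * g ω)) := by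
        intro ω
        rcases hg01 ω with h | h <;> rw [h] <;> ring
      have h0 : 0 ≤ ∫ ω, (x * g ω - f ω) ^ 2 ∂μ :=
        integral_nonneg fun ω => sq_nonneg _
      have hint1 : Integrable (fun ω => (x * x) * g ω) μ := hintg.const_mul _
      have hint2 : Integrable (fun ω => f ω ^ 2 - (2 * x) * (f ω * g ω)) μ :=
        hintf2.sub (hintfg.const_mul _)
      rw [show (fun ω => (x * g ω - f ω) ^ 2)
            = fun ω => (x * x) * g ω + (f ω ^ 2 - (2 * x) * (f ω * g ω)) by
          funext ω; have := hexp ω; linarith [hexp ω],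
        integral_add hint1 hint2, integral_const_mul,
        integral_sub hintf2 (hintfg.const_mul _), integral_const_mul, hc] at h0
      simp only [hcdef, hadef, hbdef]
      nlinarith [h0]
    have := discrim_le_zero hquad
    rw [discrim] at this
    nlinarith [this]
  -- positivity of a
  have ha_pos : 0 < a := by
    have h1 : (∫ ω, f ω ∂μ) ≤ a := by
      refine integral_mono hintf hintf2 fun ω => ?_
      have : M ω ≤ M ω ^ 2 := Nat.le_self_pow two_ne_zero _
      simp only [hfdef]
      exact_mod_cast this
    have ht1' : (1 : ℝ) ≤ t := by exact_mod_cast ht1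
    linarith
  -- conclude
  rw [div_le_iff₀ ha_pos]
  have hnn : 0 ≤ (∫ ω, f ω ∂μ) - t + 1 := by linarith
  calc ((∫ ω, f ω ∂μ) - t + 1) ^ 2 ≤ b ^ 2 := pow_le_pow_left₀ hnn step1 2
    _ ≤ c * a := hcs
end

section
/- Every tree T on n ≥ 2 vertices has at most 2^(n−1) + n − 1 subtrees, where a subtree is a nonempty subset S of V(T) whose induced subgraph T[S] is connected. Moreover, equality holds if and only if T is a star, i.e., one vertex adjacent to all other n − 1 vertices and no other edges. -/
open Finset

namespace StarSubtreeAux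

open SimpleGraph

variable {V : Type*} [DecidableEq V] {T : SimpleGraph V}

/-- Any two paths between the same endpoints in a tree coincide. -/
lemma path_eq (hT : T.IsTree) {a b : V} {p q : T.Walk a b}
    (hp : p.IsPath) (hq : q.IsPath) : p = q := by
  have := hT.IsAcyclic.path_unique ⟨p, hp⟩ ⟨q, hq⟩
  exact congrArg Subtype.val this

/-- In a tree there is a path of length `dist`. -/
lemma exists_path_dist (hT : T.IsTree) (x r : V) :
    ∃ p : T.Walk x r, p.IsPath ∧ p.length = T.dist x r := by
  obtain ⟨q, hq⟩ := (hT.isConnected.preconnected x r).exists_walk_length_eq_dist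
  exact ⟨q.bypass, q.bypass_isPath,
    le_antisymm (le_trans q.length_bypass_le hq.le) (SimpleGraph.dist_le _)⟩

/-- In a tree every path realizes the distance. -/
lemma path_length_eq_dist (hT : T.IsTree) {x r : V} {p : T.Walk x r}
    (hp : p.IsPath) : p.length = T.dist x r := by
  obtain ⟨q, hq, hql⟩ := exists_path_dist hT x r
  rw [path_eq hT hp hq, hql]

lemma dist_le_of_mem_support {x r z : V} {p : T.Walk x r}
    (hz : z ∈ p.support) : T.dist z r ≤ p.length :=
  le_trans (SimpleGraph.dist_le (p.dropUntil z hz)) (p.length_dropUntil_le hz)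

/-- Adjacent vertices in a tree have distances to `r` differing by exactly one. -/
lemma dist_step (hT : T.IsTree) {x y : V} (r : V) (h : T.Adj x y) :
    T.dist x r = T.dist y r + 1 ∨ T.dist y r = T.dist x r + 1 := by
  obtain ⟨p, hp, hpl⟩ := exists_path_dist hT y r
  by_cases hx : x ∈ p.support
  · right
    have htk : (p.takeUntil x hx).IsPath := hp.takeUntil hx
    have hdp : (p.dropUntil x hx).IsPath := hp.dropUntil hx
    have he : (Walk.cons h.symm (Walk.nil : T.Walk x x)).IsPath := by
      rw [Walk.cons_isPath_iff]
      exact ⟨Walk.IsPath.nil, by simp [h.ne']⟩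
    have htke : p.takeUntil x hx = Walk.cons h.symm Walk.nil := path_eq hT htk he
    have := p.take_spec hx
    have hlen : (p.takeUntil x hx).length + (p.dropUntil x hx).length = p.length := by
      rw [← Walk.length_append, this]
    rw [htke] at hlen
    simp only [Walk.length_cons, Walk.length_nil] at hlen
    have := path_length_eq_dist hT hdp
    omega
  · left
    have hc : (Walk.cons h p).IsPath := by
      rw [Walk.cons_isPath_iff]; exact ⟨hp, hx⟩
    have := path_length_eq_dist hT hc
    simp only [Walk.length_cons] at this
    omega

/-- A vertex has at most one neighbour strictly closer to `r`. -/
lemma lower_neighbor_unique (hT : T.IsTree) {m x₁ x₂ r : V}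
    (h₁ : T.Adj m x₁) (h₂ : T.Adj m x₂)
    (e₁ : T.dist x₁ r + 1 = T.dist m r) (e₂ : T.dist x₂ r + 1 = T.dist m r) :
    x₁ = x₂ := by
  obtain ⟨p₁, hp₁, hl₁⟩ := exists_path_dist hT x₁ r
  obtain ⟨p₂, hp₂, hl₂⟩ := exists_path_dist hT x₂ r
  have hm₁ : m ∉ p₁.support := fun hm => by
    have := dist_le_of_mem_support hm; omega
  have hm₂ : m ∉ p₂.support := fun hm => by
    have := dist_le_of_mem_support hm; omega
  have hc₁ : (Walk.cons h₁ p₁).IsPath := by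
    rw [Walk.cons_isPath_iff]; exact ⟨hp₁, hm₁⟩
  have hc₂ : (Walk.cons h₂ p₂).IsPath := by
    rw [Walk.cons_isPath_iff]; exact ⟨hp₂, hm₂⟩
  have heq : Walk.cons h₁ p₁ = Walk.cons h₂ p₂ := path_eq hT hc₁ hc₂
  have g1 : (Walk.cons h₁ p₁).getVert 1 = x₁ := by simp [Walk.getVert_cons_succ]
  have g2 : (Walk.cons h₂ p₂).getVert 1 = x₂ := by simp [Walk.getVert_cons_succ]
  rw [← g1, ← g2, heq]

/-- `getVert` is injective on indices `≤ length` for a path. -/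
lemma getVert_injOn {u v : V} {p : T.Walk u v} (hp : p.IsPath) :
    ∀ i ≤ p.length, ∀ j ≤ p.length, p.getVert i = p.getVert j → i = j := by
  induction p with
  | nil => intro i hi j hj _; simp only [Walk.length_nil, Nat.le_zero] at hi hj; omega
  | cons h q ih =>
    intro i hi j hj hij
    rw [Walk.cons_isPath_iff] at hp
    match i, j with
    | 0, 0 => rfl
    | 0, j+1 =>
      exfalso
      rw [Walk.getVert_zero, Walk.getVert_cons_succ] at hij
      exact hp.2 (Walk.mem_support_iff_exists_getVert.mpr
        ⟨j, hij.symm, by simpa using hj⟩)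
    | i+1, 0 =>
      exfalso
      rw [Walk.getVert_zero, Walk.getVert_cons_succ] at hij
      exact hp.2 (Walk.mem_support_iff_exists_getVert.mpr
        ⟨i, hij, by simpa using hi⟩)
    | i+1, j+1 =>
      rw [Walk.getVert_cons_succ, Walk.getVert_cons_succ] at hij
      have := ih hp.1 i (by simpa using hi) j (by simpa using hj) hij
      omega

/-- Inclusion homomorphism from an induced subgraph. -/
def inclHom (s : Set V) : T.induce s →g T where
  toFun := Subtype.val
  map_rel' := fun h => h

/-- From connectivity of an induced subgraph, get a path in `T` staying inside `S`. -/
lemma exists_path_in (S : Finset V) (hS : (T.induce (S : Set V)).Connected)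
    {x y : V} (hx : x ∈ S) (hy : y ∈ S) :
    ∃ p : T.Walk x y, p.IsPath ∧ ∀ z ∈ p.support, z ∈ S := by
  have hx' : x ∈ (S : Set V) := by simpa using hx
  have hy' : y ∈ (S : Set V) := by simpa using hy
  obtain ⟨W⟩ := hS.preconnected ⟨x, hx'⟩ ⟨y, hy'⟩
  have hsupp : ∀ z ∈ (W.map (inclHom (S : Set V))).support, z ∈ S := by
    intro z hz
    rw [Walk.support_map] at hz
    obtain ⟨w, _, rfl⟩ := List.mem_map.mp hz
    exact w.2
  exact ⟨(W.map (inclHom (S : Set V))).bypass, Walk.bypass_isPath _,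
    fun z hz => hsupp z (Walk.support_bypass_subset _ hz)⟩

/-- Descent: from any non-minimal vertex of a connected set there is a neighbour
in the set strictly closer to `r`. -/
lemma descent (hT : T.IsTree) (r : V) (S : Finset V)
    (hS : (T.induce (S : Set V)).Connected) {t u : V} (ht : t ∈ S)
    (hmin : ∀ s ∈ S, T.dist t r ≤ T.dist s r) (hu : u ∈ S) (hne : u ≠ t) :
    ∃ w ∈ S, T.Adj u w ∧ T.dist w r + 1 = T.dist u r := by
  obtain ⟨p, hp, hsupp⟩ := exists_path_in S hS hu ht
  have hlen : 0 < p.length := by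
    rcases Nat.eq_zero_or_pos p.length with h0 | h
    · exact absurd (Walk.eq_of_length_eq_zero h0) hne
    · exact h
  have hmem : ∀ j ≤ p.length, p.getVert j ∈ S := fun j hj =>
    hsupp _ (Walk.mem_support_iff_exists_getVert.mpr ⟨j, rfl, hj⟩)
  have hadj01 : T.Adj u (p.getVert 1) := by
    have := p.adj_getVert_succ hlen
    rwa [Walk.getVert_zero] at this
  by_cases h1 : T.dist (p.getVert 1) r ≤ T.dist u r
  · refine ⟨p.getVert 1, hmem 1 hlen, hadj01, ?_⟩
    rcases dist_step hT r hadj01 with h | h <;> omega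
  · exfalso
    obtain ⟨i, hi, hmax⟩ := (Finset.range (p.length + 1)).exists_max_image
      (fun j => T.dist (p.getVert j) r) (by simp)
    have hmaxv : ∀ j ≤ p.length, T.dist (p.getVert j) r ≤ T.dist (p.getVert i) r :=
      fun j hj => hmax j (Finset.mem_range.mpr (by omega))
    have hirange : i ≤ p.length := by have := Finset.mem_range.mp hi; omega
    have hgv0 : p.getVert 0 = u := p.getVert_zero
    have hgvl : p.getVert p.length = t := p.getVert_length
    have hi0 : i ≠ 0 := by
      intro h0
      have := hmaxv 1 hlen
      rw [h0, hgv0] at this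
      omega
    have hil : i ≠ p.length := by
      intro h0
      have h2 := hmaxv 1 hlen
      have h3 := hmin u hu
      rw [h0, hgvl] at h2
      omega
    -- interior maximum: contradiction
    have hia : i - 1 < p.length := by omega
    have hib : i < p.length := by omega
    have ha : T.Adj (p.getVert (i - 1)) (p.getVert i) := by
      have := p.adj_getVert_succ hia
      rwa [Nat.sub_add_cancel (by omega : 1 ≤ i)] at this
    have hb : T.Adj (p.getVert i) (p.getVert (i + 1)) := p.adj_getVert_succ hib
    have hda : T.dist (p.getVert (i - 1)) r ≤ T.dist (p.getVert i) r :=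
      hmaxv (i - 1) (by omega)
    have hdb : T.dist (p.getVert (i + 1)) r ≤ T.dist (p.getVert i) r :=
      hmaxv (i + 1) (by omega)
    have ea : T.dist (p.getVert (i - 1)) r + 1 = T.dist (p.getVert i) r := by
      rcases dist_step hT r ha with h | h <;> omega
    have eb : T.dist (p.getVert (i + 1)) r + 1 = T.dist (p.getVert i) r := by
      rcases dist_step hT r hb with h | h <;> omega
    have : p.getVert (i - 1) = p.getVert (i + 1) :=
      lower_neighbor_unique hT ha.symm hb ea eb
    have := getVert_injOn hp (i - 1) (by omega) (i + 1) (by omega) this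
    omega

/-- The minimizer of distance to `r` in a connected set is unique. -/
lemma min_unique (hT : T.IsTree) (r : V) (S : Finset V)
    (hS : (T.induce (S : Set V)).Connected) {t₁ t₂ : V}
    (ht₁ : t₁ ∈ S) (hmin₁ : ∀ s ∈ S, T.dist t₁ r ≤ T.dist s r)
    (ht₂ : t₂ ∈ S) (hmin₂ : ∀ s ∈ S, T.dist t₂ r ≤ T.dist s r) :
    t₁ = t₂ := by
  by_contra hne
  obtain ⟨w, hw, _, hdw⟩ := descent hT r S hS ht₂ hmin₂ ht₁ hne
  have := hmin₁ w hw
  omega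

/-- Singletons induce connected subgraphs. -/
lemma singleton_connected (T : SimpleGraph V) (x : V) :
    (T.induce (({x} : Finset V) : Set V)).Connected := by
  haveI : Nonempty (({x} : Finset V) : Set V) := ⟨⟨x, by simp⟩⟩
  constructor
  intro a b
  have ha : (a : V) = x := by have := a.2; simpa using this
  have hb : (b : V) = x := by have := b.2; simpa using this
  have : a = b := Subtype.ext (ha.trans hb.symm)
  rw [this]

end StarSubtreeAux

set_option maxHeartbeats 1000000 in
open StarSubtreeAux SimpleGraph in
/-- Every tree on `n ≥ 2` vertices has at most `2^(n-1) + n - 1` subtrees (nonempty vertex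
subsets inducing a connected subgraph), with equality exactly for stars. -/
theorem stmt_19 {V : Type*} [Fintype V] (T : SimpleGraph V) (hT : T.IsTree)
    (hn : 2 ≤ Fintype.card V) :
    {S : Finset V | S.Nonempty ∧ (T.induce (S : Set V)).Connected}.ncard ≤
      2 ^ (Fintype.card V - 1) + Fintype.card V - 1 ∧
    ({S : Finset V | S.Nonempty ∧ (T.induce (S : Set V)).Connected}.ncard =
      2 ^ (Fintype.card V - 1) + Fintype.card V - 1 ↔ IsStarGraph T) := by
  classical
  set n := Fintype.card V with hn_def
  -- a leaf `r`
  have hdegpos : ∀ v : V, 0 < T.degree v := by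
    intro v
    obtain ⟨w, hw⟩ := Fintype.exists_ne_of_one_lt_card (by omega) v
    obtain ⟨p⟩ := hT.isConnected.preconnected v w
    rw [SimpleGraph.degree_pos_iff_exists_adj]
    cases p with
    | nil => exact absurd rfl hw
    | cons h q => exact ⟨_, h⟩
  have hsum : ∑ v : V, T.degree v = 2 * (n - 1) := by
    rw [SimpleGraph.sum_degrees_eq_twice_card_edges]
    have h := hT.card_edgeFinset
    omega
  have hleaf : ∃ r : V, T.degree r = 1 := by
    by_contra hno
    push_neg at hno
    have h2 : ∀ v : V, 2 ≤ T.degree v := by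
      intro v; have := hdegpos v; have := hno v; omega
    have hsum2 : 2 * n ≤ ∑ v : V, T.degree v := by
      calc 2 * n = ∑ _v : V, 2 := by
            rw [Finset.sum_const, Finset.card_univ, smul_eq_mul, mul_comm]
        _ ≤ ∑ v : V, T.degree v := Finset.sum_le_sum fun v _ => h2 v
    omega
  obtain ⟨r, hr⟩ := hleaf
  obtain ⟨c, hc⟩ : ∃ c, c ∈ T.neighborFinset r := Finset.card_pos.mp (by
    rw [show #(T.neighborFinset r) = T.degree r from rfl, hr]; omega)
  have hNr : T.neighborFinset r = {c} := by
    obtain ⟨a, ha⟩ := Finset.card_eq_one.mp (by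
      rw [show #(T.neighborFinset r) = T.degree r from rfl, hr])
    rw [ha] at hc ⊢
    rw [Finset.mem_singleton] at hc
    rw [hc]
  have hrc : T.Adj r c := (SimpleGraph.mem_neighborFinset T r c).mp (by simp [hNr])
  have hd0 : ∀ x : V, T.dist x r = 0 ↔ x = r := fun x => hT.isConnected.dist_eq_zero_iff
  have hdc : T.dist c r = 1 := by
    have h1 : T.dist c r ≤ 1 := by
      have := SimpleGraph.dist_le (Walk.cons hrc.symm (Walk.nil : T.Walk r r))
      simpa using this
    have h2 : T.dist c r ≠ 0 := fun h => hrc.ne ((hd0 c).mp h).symm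
    omega
  -- the collection of subtrees
  set P : Finset V → Prop := fun S => S.Nonempty ∧ (T.induce (S : Set V)).Connected with hP_def
  set SS : Finset (Finset V) := Finset.univ.filter P with hSS_def
  have hset : {S : Finset V | S.Nonempty ∧ (T.induce (S : Set V)).Connected} = ↑SS := by
    ext S; simp [hSS_def, hP_def]
  rw [hset, Set.ncard_coe_finset]
  set SS1 : Finset (Finset V) := SS.filter (fun S => S.card = 1) with hSS1_def
  set SS2 : Finset (Finset V) := SS.filter (fun S => ¬S.card = 1) with hSS2_def
  have hcard12 : SS1.card + SS2.card = SS.card :=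
    Finset.card_filter_add_card_filter_not _
  have hSS1 : SS1 = Finset.univ.image (fun x : V => ({x} : Finset V)) := by
    ext S
    simp only [hSS1_def, hSS_def, Finset.mem_filter, Finset.mem_univ, true_and,
      Finset.mem_image]
    constructor
    · rintro ⟨_, hc1⟩
      obtain ⟨x, rfl⟩ := Finset.card_eq_one.mp hc1
      exact ⟨x, rfl⟩
    · rintro ⟨x, rfl⟩
      exact ⟨⟨Finset.singleton_nonempty x, singleton_connected T x⟩, Finset.card_singleton x⟩
  have hcardSS1 : SS1.card = n := by
    rw [hSS1, Finset.card_image_of_injective _ Finset.singleton_injective,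
      Finset.card_univ]
  have hSS2mem : ∀ S ∈ SS2, P S ∧ 2 ≤ S.card := by
    intro S hS
    rw [hSS2_def, Finset.mem_filter, hSS_def, Finset.mem_filter] at hS
    have h1 : 1 ≤ S.card := Finset.card_pos.mpr hS.1.2.1
    exact ⟨hS.1.2, by omega⟩
  -- the "top" of each subtree and the injection
  set top : ∀ S : Finset V, S.Nonempty → V :=
    fun S h => (S.exists_min_image (fun x => T.dist x r) h).choose with htop_def
  have htop_mem : ∀ S h, top S h ∈ S :=
    fun S h => (S.exists_min_image (fun x => T.dist x r) h).choose_spec.1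
  have htop_min : ∀ S h, ∀ s ∈ S, T.dist (top S h) r ≤ T.dist s r :=
    fun S h => (S.exists_min_image (fun x => T.dist x r) h).choose_spec.2
  set Phi : Finset V → Finset V :=
    fun S => if h : S.Nonempty then S.erase (top S h) else ∅ with hPhi_def
  have hPhi_eq : ∀ (S : Finset V) (h : S.Nonempty), Phi S = S.erase (top S h) := by
    intro S h; rw [hPhi_def]; simp only [dif_pos h]
  have htop_strict : ∀ S ∈ SS2, ∀ (h : S.Nonempty), ∀ a ∈ S, a ≠ top S h →
      T.dist (top S h) r < T.dist a r := by
    intro S hS h a ha hne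
    obtain ⟨⟨_, hconn⟩, _⟩ := hSS2mem S hS
    have hle := htop_min S h a ha
    rcases lt_or_eq_of_le hle with hlt | heq
    · exact hlt
    · exfalso
      refine hne (min_unique hT r S hconn ha ?_ (htop_mem S h) (htop_min S h))
      intro s hs
      rw [← heq]
      exact htop_min S h s hs
  have htop_r : ∀ (S : Finset V) (h : S.Nonempty), r ∈ S → top S h = r := by
    intro S h hrS
    have := htop_min S h r hrS
    rw [SimpleGraph.dist_self] at this
    exact (hd0 _).mp (by omega)
  set TT : Finset (Finset V) := ((Finset.univ.erase r).powerset).erase ∅ with hTT_def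
  have hTTcard : TT.card = 2 ^ (n - 1) - 1 := by
    rw [hTT_def, Finset.card_erase_of_mem (Finset.mem_powerset.mpr (Finset.empty_subset _)),
      Finset.card_powerset, Finset.card_erase_of_mem (Finset.mem_univ r), Finset.card_univ]
  have hmaps : ∀ S ∈ SS2, Phi S ∈ TT := by
    intro S hS
    obtain ⟨⟨hne, hconn⟩, hc2⟩ := hSS2mem S hS
    rw [hPhi_eq S hne, hTT_def]
    refine Finset.mem_erase.mpr ⟨?_, Finset.mem_powerset.mpr ?_⟩
    · intro h0
      have := Finset.card_erase_of_mem (htop_mem S hne)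
      rw [h0] at this
      simp only [Finset.card_empty] at this
      omega
    · intro z hz
      rw [Finset.mem_erase] at hz
      refine Finset.mem_erase.mpr ⟨?_, Finset.mem_univ z⟩
      intro hzr
      subst hzr
      exact hz.1 (htop_r S hne hz.2).symm
  have hinj : Set.InjOn Phi ↑SS2 := by
    intro S1 hS1' S2 hS2' hPhiEq
    have hS1 := hSS2mem S1 (by simpa using hS1')
    have hS2 := hSS2mem S2 (by simpa using hS2')
    obtain ⟨⟨hne1, hconn1⟩, hc1⟩ := hS1
    obtain ⟨⟨hne2, hconn2⟩, hc2⟩ := hS2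
    obtain ⟨t1, ht1mem, ht1min, hPhi1⟩ :
        ∃ t, t ∈ S1 ∧ (∀ s ∈ S1, T.dist t r ≤ T.dist s r) ∧ Phi S1 = S1.erase t :=
      ⟨top S1 hne1, htop_mem S1 hne1, htop_min S1 hne1, hPhi_eq S1 hne1⟩
    obtain ⟨t2, ht2mem, ht2min, hPhi2⟩ :
        ∃ t, t ∈ S2 ∧ (∀ s ∈ S2, T.dist t r ≤ T.dist s r) ∧ Phi S2 = S2.erase t :=
      ⟨top S2 hne2, htop_mem S2 hne2, htop_min S2 hne2, hPhi_eq S2 hne2⟩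
    rw [hPhi1, hPhi2] at hPhiEq
    by_cases hts : t1 = t2
    · have := congrArg (insert t1) hPhiEq
      rwa [Finset.insert_erase ht1mem, hts, Finset.insert_erase ht2mem] at this
    · exfalso
      have hAne : (S1.erase t1).Nonempty := by
        have := Finset.card_erase_of_mem ht1mem
        exact Finset.card_pos.mp (by omega)
      have hAS2 : ∀ a ∈ S1.erase t1, a ∈ S2 := fun a ha => by
        rw [hPhiEq] at ha; exact Finset.mem_of_mem_erase ha
      obtain ⟨u, huA, humin⟩ := (S1.erase t1).exists_min_image (fun x => T.dist x r) hAne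
      have hu1 : u ∈ S1 := Finset.mem_of_mem_erase huA
      have hu2 : u ∈ S2 := hAS2 u huA
      have hun1 : u ≠ t1 := (Finset.mem_erase.mp huA).1
      have hun2 : u ≠ t2 := by
        have := huA
        rw [hPhiEq] at this
        exact (Finset.mem_erase.mp this).1
      obtain ⟨w1, hw1S, hw1adj, hw1d⟩ := descent hT r S1 hconn1 ht1mem ht1min hu1 hun1
      obtain ⟨w2, hw2S, hw2adj, hw2d⟩ := descent hT r S2 hconn2 ht2mem ht2min hu2 hun2
      have hw1t : w1 = t1 := by
        by_contra hne
        have hw1A : w1 ∈ S1.erase t1 := Finset.mem_erase.mpr ⟨hne, hw1S⟩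
        have := humin w1 hw1A
        omega
      have hw2t : w2 = t2 := by
        by_contra hne
        have hw2A : w2 ∈ S1.erase t1 := by
          rw [hPhiEq]; exact Finset.mem_erase.mpr ⟨hne, hw2S⟩
        have := humin w2 hw2A
        omega
      subst hw1t hw2t
      exact hts (lower_neighbor_unique hT hw1adj hw2adj hw1d hw2d)
  have hkey2 : SS2.card ≤ 2 ^ (n - 1) - 1 := by
    rw [← hTTcard]
    exact Finset.card_le_card_of_injOn Phi hmaps hinj
  have hone : 1 ≤ 2 ^ (n - 1) := Nat.one_le_two_pow
  constructor
  · omega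
  constructor
  · -- equality implies star
    intro heq
    have hSS2card : SS2.card = 2 ^ (n - 1) - 1 := by omega
    have himg : SS2.image Phi = TT := by
      apply Finset.eq_of_subset_of_card_le
      · intro A hA
        obtain ⟨S, hS, rfl⟩ := Finset.mem_image.mp hA
        exact hmaps S hS
      · rw [Finset.card_image_of_injOn hinj, hSS2card, hTTcard]
    have hsurj : ∀ A ∈ TT, ∃ S ∈ SS2, Phi S = A := by
      intro A hA
      rw [← himg] at hA
      obtain ⟨S, hS, hPS⟩ := Finset.mem_image.mp hA
      exact ⟨S, hS, hPS⟩
    have hxc : ∀ x : V, x ≠ r → x ≠ c → T.Adj x c := by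
      intro x hxr hxc'
      have hA : ({x, c} : Finset V) ∈ TT := by
        rw [hTT_def]
        refine Finset.mem_erase.mpr ⟨Finset.insert_ne_empty _ _, Finset.mem_powerset.mpr ?_⟩
        intro z hz
        rcases Finset.mem_insert.mp hz with rfl | hz
        · exact Finset.mem_erase.mpr ⟨hxr, Finset.mem_univ _⟩
        · rw [Finset.mem_singleton] at hz
          subst hz
          exact Finset.mem_erase.mpr ⟨hrc.ne', Finset.mem_univ _⟩
      obtain ⟨S, hS2, hPhiS⟩ := hsurj _ hA
      obtain ⟨⟨hne, hconn⟩, hcard2⟩ := hSS2mem S hS2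
      obtain ⟨t, htS, htmin, htPhi⟩ :
          ∃ t, t ∈ S ∧ (∀ s ∈ S, T.dist t r ≤ T.dist s r) ∧ Phi S = S.erase t :=
        ⟨top S hne, htop_mem S hne, htop_min S hne, hPhi_eq S hne⟩
      rw [htPhi] at hPhiS
      have htA : t ∉ ({x, c} : Finset V) := by
        rw [← hPhiS]; exact Finset.notMem_erase _ _
      have hcS : c ∈ S := by
        have : c ∈ ({x, c} : Finset V) := by simp
        rw [← hPhiS] at this
        exact Finset.mem_of_mem_erase this
      have hxS : x ∈ S := by
        have : x ∈ ({x, c} : Finset V) := by simp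
        rw [← hPhiS] at this
        exact Finset.mem_of_mem_erase this
      have hct : c ≠ t := fun h => htA (by simp [← h])
      have htr : t = r := by
        have hle := htmin c hcS
        rw [hdc] at hle
        rcases Nat.lt_or_ge (T.dist t r) 1 with h1 | h1
        · exact (hd0 t).mp (by omega)
        · exfalso
          have heq : T.dist t r = 1 := by omega
          exact hct (min_unique hT r S hconn hcS (fun s hs => by
            rw [hdc, ← heq]; exact htmin s hs) htS htmin)
      subst htr
      obtain ⟨w, hwS, hwadj, hwd⟩ := descent hT t S hconn htS htmin hxS hxr
      have hSeq : S = insert t ({x, c} : Finset V) := by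
        rw [← hPhiS, Finset.insert_erase htS]
      have hwx : w ≠ x := fun h => (hwadj.ne (h.symm ▸ rfl)).elim
      rw [hSeq] at hwS
      rcases Finset.mem_insert.mp hwS with rfl | hw
      · exfalso
        have : x ∈ T.neighborFinset w := (SimpleGraph.mem_neighborFinset T w x).mpr hwadj.symm
        rw [hNr] at this
        rw [Finset.mem_singleton] at this
        exact hxc' this
      · rcases Finset.mem_insert.mp hw with rfl | hw
        · exact absurd rfl hwx
        · rw [Finset.mem_singleton] at hw
          subst hw
          exact hwadj
    refine ⟨c, fun a b => ⟨?_, ?_⟩⟩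
    · intro hab
      refine ⟨hab.ne, ?_⟩
      by_contra hcon
      push_neg at hcon
      obtain ⟨hac', hbc'⟩ := hcon
      have hadjc : ∀ z : V, z ≠ c → T.Adj z c := by
        intro z hz
        by_cases hzr : z = r
        · subst hzr; exact hrc
        · exact hxc z hzr hz
      have hac : T.Adj a c := hadjc a hac'
      have hbc : T.Adj b c := hadjc b hbc'
      have hcyc : (Walk.cons hab (Walk.cons hbc (Walk.cons hac.symm Walk.nil))).IsCycle := by
        rw [Walk.isCycle_def]
        refine ⟨?_, by simp, ?_⟩
        · rw [Walk.isTrail_def]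
          simp only [Walk.edges_cons, Walk.edges_nil, List.nodup_cons, List.mem_cons,
            List.not_mem_nil, or_false, List.mem_singleton, List.nodup_nil, and_true,
            List.not_mem_nil, not_false_iff]
          refine ⟨?_, ?_⟩
          · rintro (h | h) <;> rw [Sym2.eq_iff] at h <;>
              rcases h with ⟨h1, h2⟩ | ⟨h1, h2⟩ <;> simp_all
          · intro h; rw [Sym2.eq_iff] at h
            rcases h with ⟨h1, h2⟩ | ⟨h1, h2⟩ <;> simp_all
        · simp only [Walk.support_cons, Walk.support_nil, List.tail_cons]
          refine List.nodup_cons.mpr ⟨?_, List.nodup_cons.mpr ⟨?_, List.nodup_singleton _⟩⟩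
          · intro h
            rcases List.mem_cons.mp h with h | h
            · exact hbc' h
            · rw [List.mem_singleton] at h; exact hab.ne' h
          · intro h; rw [List.mem_singleton] at h; exact hac' h.symm
      exact hT.IsAcyclic _ hcyc
    · rintro ⟨hne, rfl | rfl⟩
      · -- a = c : Adj c b
        by_cases hbr : b = r
        · subst hbr; exact hrc.symm
        · exact (hxc b hbr (Ne.symm hne)).symm
      · -- b = c : Adj a c
        by_cases har : a = r
        · subst har; exact hrc
        · exact hxc a har hne
  · -- star implies equality
    rintro ⟨v, hv⟩
    have hPv : ∀ S : Finset V, v ∈ S → P S := by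
      intro S hvS
      refine ⟨⟨v, hvS⟩, ?_⟩
      haveI : Nonempty ((S : Finset V) : Set V) := ⟨⟨v, by simpa using hvS⟩⟩
      constructor
      intro a b
      have key : ∀ z : ((S : Finset V) : Set V),
          (T.induce (S : Set V)).Reachable z ⟨v, by simpa using hvS⟩ := by
        intro z
        by_cases hz : (z : V) = v
        · have : z = ⟨v, by simpa using hvS⟩ := Subtype.ext hz
          rw [this]
        · refine SimpleGraph.Adj.reachable ?_
          show T.Adj (z : V) v
          rw [hv]
          exact ⟨hz, Or.inr rfl⟩
      exact (key a).trans (key b).symm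
    have hvmem : ∀ S ∈ SS, 2 ≤ S.card → v ∈ S := by
      intro S hS hc2
      rw [hSS_def, Finset.mem_filter] at hS
      obtain ⟨_, hne, hconn⟩ := hS
      obtain ⟨a, ha⟩ := hne
      obtain ⟨b, hb, hba⟩ := Finset.exists_mem_ne (show 1 < S.card by omega) a
      obtain ⟨p, hp, hsupp⟩ := exists_path_in S hconn hb ha
      have hlen : 0 < p.length := by
        rcases Nat.eq_zero_or_pos p.length with h0 | h
        · exact absurd (Walk.eq_of_length_eq_zero h0) hba
        · exact h
      have hadj : T.Adj b (p.getVert 1) := by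
        have := p.adj_getVert_succ hlen
        rwa [Walk.getVert_zero] at this
      have hv1 := (hv b (p.getVert 1)).mp hadj
      rcases hv1.2 with h | h
      · rw [← h]; exact hb
      · rw [← h]
        exact hsupp _ (Walk.mem_support_iff_exists_getVert.mpr ⟨1, rfl, hlen⟩)
    have hSSeq : SS = (Finset.univ.filter (fun S : Finset V => v ∈ S)) ∪
        (Finset.univ.erase v).image (fun x : V => ({x} : Finset V)) := by
      ext S
      simp only [Finset.mem_union, Finset.mem_filter, Finset.mem_univ, true_and,
        Finset.mem_image]
      constructor
      · intro hS
        have hS' := hS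
        rw [hSS_def, Finset.mem_filter] at hS'
        obtain ⟨_, hne, hconn⟩ := hS'
        have h1 : 1 ≤ S.card := Finset.card_pos.mpr hne
        rcases Nat.lt_or_ge S.card 2 with hlt | hge
        · have : S.card = 1 := by omega
          obtain ⟨x, rfl⟩ := Finset.card_eq_one.mp this
          by_cases hxv : x = v
          · subst hxv; left; simp
          · right; exact ⟨x, Finset.mem_erase.mpr ⟨hxv, Finset.mem_univ _⟩, rfl⟩
        · left; exact hvmem S hS hge
      · intro h
        rw [hSS_def, Finset.mem_filter]
        rcases h with hvS | ⟨x, _, rfl⟩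
        · exact ⟨Finset.mem_univ _, hPv S hvS⟩
        · exact ⟨Finset.mem_univ _,
            ⟨Finset.singleton_nonempty x, singleton_connected T x⟩⟩
    have hdisj : Disjoint (Finset.univ.filter (fun S : Finset V => v ∈ S))
        ((Finset.univ.erase v).image (fun x : V => ({x} : Finset V))) := by
      rw [Finset.disjoint_left]
      intro S hS1 hS2
      rw [Finset.mem_filter] at hS1
      obtain ⟨x, hx, rfl⟩ := Finset.mem_image.mp hS2
      rw [Finset.mem_erase] at hx
      rw [Finset.mem_singleton] at hS1
      exact hx.1 hS1.2.symm
    have hcard1 : (Finset.univ.filter (fun S : Finset V => v ∈ S)).card = 2 ^ (n - 1) := by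
      rw [show (2 : ℕ) ^ (n - 1) = ((Finset.univ.erase v).powerset).card by
        rw [Finset.card_powerset, Finset.card_erase_of_mem (Finset.mem_univ v),
          Finset.card_univ]]
      refine Finset.card_bij' (fun S _ => S.erase v) (fun A _ => insert v A)
        ?_ ?_ ?_ ?_
      · intro S hS
        rw [Finset.mem_powerset]
        intro z hz
        rw [Finset.mem_erase] at hz
        exact Finset.mem_erase.mpr ⟨hz.1, Finset.mem_univ _⟩
      · intro A hA
        rw [Finset.mem_filter]
        exact ⟨Finset.mem_univ _, Finset.mem_insert_self _ _⟩
      · intro S hS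
        rw [Finset.mem_filter] at hS
        exact Finset.insert_erase hS.2
      · intro A hA
        rw [Finset.mem_powerset] at hA
        apply Finset.erase_insert
        intro hvA
        have := hA hvA
        rw [Finset.mem_erase] at this
        exact this.1 rfl
    have hcard2 : ((Finset.univ.erase v).image (fun x : V => ({x} : Finset V))).card
        = n - 1 := by
      rw [Finset.card_image_of_injective _ Finset.singleton_injective,
        Finset.card_erase_of_mem (Finset.mem_univ v), Finset.card_univ]
    rw [hSSeq, Finset.card_union_of_disjoint hdisj, hcard1, hcard2]
    omega
end
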